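/- There exists a binary phylogenetic network N over a 3-element leaf set X such that N is based on every one of the three rooted binary phylogenetic X-trees. -/

import Mathlib

/-! Directed multigraphs, walks, and binary phylogenetic networks
(following Francis & Steel, "Which phylogenetic networks are merely
trees with additional arcs?"). -/

universe u1 u2 u3 u4 u5 u6 u7

/-- In-degree of `v`: the number of arcs with target `v`. -/
noncomputable def InDeg {V : Type u2} {A : Type u3} (t : A → V) (v : V) : ℕ := {a : A | t a = v}.ncard

/-- Out-degree of `v`: the number of arcs with source `v`. -/
noncomputable def OutDeg {V : Type u2} {A : Type u3} (s : A → V) (v : V) : ℕ := {a : A | s a = v}.ncard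

/-- In-degree of `v` in the sub-digraph with arc set `A₀`. -/
noncomputable def InDegIn {V : Type u2} {A : Type u3} (t : A → V) (A₀ : Set A) (v : V) : ℕ :=
  {a : A | a ∈ A₀ ∧ t a = v}.ncard

/-- Out-degree of `v` in the sub-digraph with arc set `A₀`. -/
noncomputable def OutDegIn {V : Type u2} {A : Type u3} (s : A → V) (A₀ : Set A) (v : V) : ℕ :=
  {a : A | a ∈ A₀ ∧ s a = v}.ncard

/-- `ArcWalk s t u p v` : the list of arcs `p` is a directed walk from `u` to `v`
(consecutive arcs are compatible). -/
inductive ArcWalk {V : Type u2} {A : Type u3} (s t : A → V) : V → List A → V → Prop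
  | nil (v : V) : ArcWalk s t v [] v
  | cons {u w : V} {a : A} {p : List A} :
      s a = u → ArcWalk s t (t a) p w → ArcWalk s t u (a :: p) w

/-- The digraph `(V, S)` is a rooted directed tree with root `r`: every vertex of `V`
is reachable from `r` by a unique directed path using only arcs in `S`. -/
def IsRootedTree {V : Type u2} {A : Type u3} (s t : A → V) (S : Set A) (r : V) : Prop :=
  ∀ v : V, ∃! p : List A, (∀ a ∈ p, a ∈ S) ∧ ArcWalk s t r p v

/-- `(V₀, A₀)` is a rooted directed tree with root `r` (as a sub-digraph of the
ambient digraph given by `s`, `t`). -/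
def IsRootedTreeOn {V : Type u2} {A : Type u3} (s t : A → V) (V₀ : Set V) (A₀ : Set A)
    (r : V) : Prop :=
  r ∈ V₀ ∧ (∀ a ∈ A₀, s a ∈ V₀ ∧ t a ∈ V₀) ∧
    ∀ v ∈ V₀, ∃! p : List A, (∀ a ∈ p, a ∈ A₀) ∧ ArcWalk s t r p v

/-- A set of arcs is independent if no two distinct arcs of it share a vertex
(the vertices of an arc `a` being `s a` and `t a`). -/
def IndepArcs {V : Type u2} {A : Type u3} (s t : A → V) (I : Set A) : Prop :=
  ∀ a ∈ I, ∀ b ∈ I, a ≠ b → s a ≠ s b ∧ s a ≠ t b ∧ t a ≠ s b ∧ t a ≠ t b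

/-- A binary phylogenetic network over the (finite) leaf set `X`: a finite acyclic
directed multigraph whose out-degree-0 vertices are exactly the (images of the)
elements of `X`, each leaf has in-degree 1, there is a unique in-degree-0 vertex
(the root) of out-degree 1 or 2, and every other vertex has in-degree 2 and
out-degree 1, or in-degree 1 and out-degree 2. -/
structure PhyloNetwork (X : Type u1) (V : Type u2) (A : Type u3) where
  src : A → V
  tgt : A → V
  leafEmb : X → V
  root : V
  finV : Finite V
  finA : Finite A
  leafEmb_inj : Function.Injective leafEmb
  acyclic : ∀ (v : V) (p : List A), p ≠ [] → ¬ ArcWalk src tgt v p v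
  leaf_iff : ∀ v : V, (∃ x : X, leafEmb x = v) ↔ OutDeg src v = 0
  leaf_indeg : ∀ x : X, InDeg tgt (leafEmb x) = 1
  root_indeg : InDeg tgt root = 0
  root_unique : ∀ v : V, InDeg tgt v = 0 → v = root
  root_outdeg : OutDeg src root = 1 ∨ OutDeg src root = 2
  deg_other : ∀ v : V, v ≠ root → (¬ ∃ x : X, leafEmb x = v) →
    (InDeg tgt v = 2 ∧ OutDeg src v = 1) ∨ (InDeg tgt v = 1 ∧ OutDeg src v = 2)

namespace PhyloNetwork

variable {X : Type u1} {V : Type u2} {A : Type u3}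

/-- The set of leaves of the network (the copy of `X` inside `V`). -/
def leaves (N : PhyloNetwork X V A) : Set V := Set.range N.leafEmb

/-- `S ⊆ A` is a support tree for `N`: the digraph `(V, S)` is a rooted directed
tree with root `N.root` whose out-degree-0 vertices are exactly the leaves. -/
def IsSupportTree (N : PhyloNetwork X V A) (S : Set A) : Prop :=
  IsRootedTree N.src N.tgt S N.root ∧
    ∀ v : V, OutDegIn N.src S v = 0 ↔ v ∈ N.leaves

/-- `N` is tree-based if it has a support tree. -/
def TreeBased (N : PhyloNetwork X V A) : Prop := ∃ S : Set A, N.IsSupportTree S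

/-- `S₁`: the arcs whose source has out-degree 1 or whose target has in-degree 1. -/
def S1 (N : PhyloNetwork X V A) : Set A :=
  {a : A | OutDeg N.src (N.src a) = 1 ∨ InDeg N.tgt (N.tgt a) = 1}

/-- `S` is admissible: it contains `S₁`, every in-degree-2 vertex has exactly one
incoming arc in `S` (C₁), and every out-degree-2 vertex has at least one outgoing
arc in `S` (C₂). -/
def Admissible (N : PhyloNetwork X V A) (S : Set A) : Prop :=
  N.S1 ⊆ S ∧
    (∀ v : V, InDeg N.tgt v = 2 → ∃! a : A, a ∈ S ∧ N.tgt a = v) ∧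
    (∀ v : V, OutDeg N.src v = 2 → ∃ a ∈ S, N.src a = v)

/-- An antichain: no directed path from one element to another distinct element. -/
def IsAntichainIn (N : PhyloNetwork X V A) (𝒜 : Set V) : Prop :=
  ∀ u ∈ 𝒜, ∀ v ∈ 𝒜, u ≠ v → ∀ p : List A, ¬ ArcWalk N.src N.tgt u p v

/-- The antichain-to-leaf property: from every antichain of non-leaf vertices there
is a family of pairwise arc-disjoint directed paths to leaves. -/
def AntichainToLeaf (N : PhyloNetwork X V A) : Prop :=
  ∀ 𝒜 : Set V, (∀ v ∈ 𝒜, v ∉ N.leaves) → N.IsAntichainIn 𝒜 →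
    ∃ p : V → List A,
      (∀ v ∈ 𝒜, ∃ w ∈ N.leaves, ArcWalk N.src N.tgt v (p v) w) ∧
      (∀ u ∈ 𝒜, ∀ v ∈ 𝒜, u ≠ v → ∀ a ∈ p u, a ∉ p v)

end PhyloNetwork

/-- The sub-digraph `(V₀, A₀)` of the digraph given by `s, t` is a subdivision of the
digraph given by `s', t'`, realized by the vertex map `φV`: the vertices of the target
digraph correspond exactly to the vertices of `(V₀, A₀)` that do not have in-degree 1
and out-degree 1, and each target arc corresponds to a directed path of `(V₀, A₀)`
with all internal vertices suppressed, these paths partitioning `A₀`. Equivalently,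
the target digraph is obtained from `(V₀, A₀)` by repeatedly suppressing all vertices
of in-degree 1 and out-degree 1. -/
def SubdivOn {V : Type u2} {A : Type u3} {V' : Type u4} {A' : Type u5}
    (s t : A → V) (V₀ : Set V) (A₀ : Set A) (s' t' : A' → V') (φV : V' → V) : Prop :=
  Function.Injective φV ∧
  (∀ v' : V', φV v' ∈ V₀) ∧
  (∀ a ∈ A₀, s a ∈ V₀ ∧ t a ∈ V₀) ∧
  (∀ v ∈ V₀, v ∈ Set.range φV ↔ ¬ (InDegIn t A₀ v = 1 ∧ OutDegIn s A₀ v = 1)) ∧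
  ∃ φA : A' → List A,
    (∀ e : A', φA e ≠ [] ∧ (φA e).Nodup ∧ (∀ a ∈ φA e, a ∈ A₀) ∧
      ArcWalk s t (φV (s' e)) (φA e) (φV (t' e)) ∧
      ∀ a ∈ (φA e).dropLast, t a ∉ Set.range φV) ∧
    (∀ a ∈ A₀, ∃! e : A', a ∈ φA e)

/-- A rooted binary phylogenetic `X`-tree: a binary phylogenetic network over `X`
with no vertices of in-degree 2. -/
def IsPhyloTree {X : Type u1} {V : Type u2} {A : Type u3}
    (T : PhyloNetwork X V A) : Prop :=
  ∀ v : V, InDeg T.tgt v ≠ 2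

/-- `N` is based on the tree `T`: `N` has a support tree `S` such that `(V, S)` is a
subdivision of `T`, matching roots and leaf labels. -/
def BasedOn {X : Type u1} {V : Type u2} {A : Type u3} {V' : Type u4} {A' : Type u5}
    (N : PhyloNetwork X V A) (T : PhyloNetwork X V' A') : Prop :=
  ∃ (S : Set A) (φV : V' → V),
    N.IsSupportTree S ∧
    SubdivOn N.src N.tgt Set.univ S T.src T.tgt φV ∧
    φV T.root = N.root ∧
    ∀ x : X, φV (T.leafEmb x) = N.leafEmb x

/-- `N` displays the tree `T`: there are `V₀ ⊆ V` and `A₀ ⊆ A` forming a rooted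
directed tree whose out-degree-0 vertices are exactly the leaves of `N`, such that
`T` is obtained from `(V₀, A₀)` by repeatedly suppressing vertices of in-degree 1 and
out-degree 1 and deleting the root together with its outgoing arc so long as the root
has out-degree 1 (the deleted root chain is the path `p₀`). -/
def Displays {X : Type u1} {V : Type u2} {A : Type u3} {V' : Type u4} {A' : Type u5}
    (N : PhyloNetwork X V A) (T : PhyloNetwork X V' A') : Prop :=
  ∃ (V₀ : Set V) (A₀ : Set A) (r₀ : V) (φV : V' → V) (p₀ : List A) (φA : A' → List A),
    IsRootedTreeOn N.src N.tgt V₀ A₀ r₀ ∧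
    (∀ v ∈ V₀, OutDegIn N.src A₀ v = 0 ↔ v ∈ N.leaves) ∧
    Function.Injective φV ∧
    (∀ v' : V', φV v' ∈ V₀) ∧
    (∀ x : X, φV (T.leafEmb x) = N.leafEmb x) ∧
    p₀.Nodup ∧ (∀ a ∈ p₀, a ∈ A₀) ∧
    ArcWalk N.src N.tgt r₀ p₀ (φV T.root) ∧
    (∀ a ∈ p₀, OutDegIn N.src A₀ (N.src a) = 1 ∧ N.src a ∉ Set.range φV) ∧
    (∀ e : A', φA e ≠ [] ∧ (φA e).Nodup ∧ (∀ a ∈ φA e, a ∈ A₀) ∧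
      ArcWalk N.src N.tgt (φV (T.src e)) (φA e) (φV (T.tgt e)) ∧
      ∀ a ∈ (φA e).dropLast, N.tgt a ∉ Set.range φV) ∧
    (∀ a ∈ A₀, (a ∈ p₀ ∧ ∀ e : A', a ∉ φA e) ∨ (a ∉ p₀ ∧ ∃! e : A', a ∈ φA e))

/-- The vertices of `N` having a directed path (possibly trivial) to a vertex in `L`. -/
def KeepV {X : Type u1} {V : Type u2} {A : Type u3}
    (N : PhyloNetwork X V A) (L : Set V) : Set V :=
  {v : V | ∃ (p : List A) (w : V), w ∈ L ∧ ArcWalk N.src N.tgt v p w}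

/-- The arcs of `N` lying on a directed path ending at a vertex in `L`. -/
def KeepA {X : Type u1} {V : Type u2} {A : Type u3}
    (N : PhyloNetwork X V A) (L : Set V) : Set A :=
  {a : A | ∃ (p : List A) (w : V), w ∈ L ∧ ArcWalk N.src N.tgt (N.tgt a) p w}


/-! ## Infrastructure -/

section Walks
variable {V : Type u2} {A : Type u3} {s t : A → V}

theorem ArcWalk.nil_eq {u v : V} (h : ArcWalk s t u [] v) : u = v := by cases h; rfl

theorem ArcWalk.append' {u v w : V} {p q : List A} (h1 : ArcWalk s t u p v)
    (h2 : ArcWalk s t v q w) : ArcWalk s t u (p ++ q) w := by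
  induction h1 with
  | nil => exact h2
  | cons hs _ ih => exact ArcWalk.cons hs (ih h2)

theorem ArcWalk.single {a : A} : ArcWalk s t (s a) [a] (t a) :=
  ArcWalk.cons rfl (ArcWalk.nil _)

theorem ArcWalk.single' {a : A} {u v : V} (h1 : s a = u) (h2 : t a = v) :
    ArcWalk s t u [a] v := h1 ▸ h2 ▸ ArcWalk.single

theorem ArcWalk.cons' {u m w : V} {a : A} {p : List A} (h1 : s a = u) (h2 : t a = m)
    (h : ArcWalk s t m p w) : ArcWalk s t u (a :: p) w := ArcWalk.cons h1 (h2 ▸ h)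

theorem ArcWalk.cons_inv {u w : V} {a : A} {p : List A} (h : ArcWalk s t u (a :: p) w) :
    s a = u ∧ ArcWalk s t (t a) p w := by
  cases h with
  | cons hs h' => exact ⟨hs, h'⟩

theorem ArcWalk.snoc_decomp {u w : V} {p : List A} (h : ArcWalk s t u p w) (hp : p ≠ []) :
    ∃ q a, p = q ++ [a] ∧ ArcWalk s t u q (s a) ∧ t a = w := by
  induction h with
  | nil => exact absurd rfl hp
  | @cons u' w' a p' hs h' ih =>
    rcases eq_or_ne p' [] with rfl | hne
    · exact ⟨[], a, rfl, hs ▸ ArcWalk.nil _, h'.nil_eq⟩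
    · obtain ⟨q, b, rfl, hw, htb⟩ := ih hne
      exact ⟨a :: q, b, rfl, ArcWalk.cons hs hw, htb⟩

theorem ArcWalk.rank_lt {rank : V → ℕ} {u w : V} {p : List A}
    (h : ArcWalk s t u p w) (hp : p ≠ []) (hr : ∀ a ∈ p, rank (s a) < rank (t a)) :
    rank u < rank w := by
  induction h with
  | nil => exact absurd rfl hp
  | @cons u' w' a p' hs h' ih =>
    have h1 : rank u' < rank (t a) := hs ▸ hr a (by simp)
    rcases eq_or_ne p' [] with rfl | hne
    · exact h'.nil_eq ▸ h1
    · exact h1.trans (ih hne (fun b hb => hr b (by simp [hb])))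

theorem acyclic_of_rank {rank : V → ℕ} (hr : ∀ a, rank (s a) < rank (t a)) :
    ∀ (v : V) (p : List A), p ≠ [] → ¬ ArcWalk s t v p v := by
  intro v p hp h
  exact lt_irrefl _ (h.rank_lt hp (fun a _ => hr a))

theorem isRootedTree_of_parent {S : Set A} {r : V}
    (rank : V → ℕ) (par : V → Option A)
    (hroot : par r = none)
    (hpar : ∀ v, v ≠ r → ∃ a, par v = some a ∧ a ∈ S ∧ t a = v ∧ rank (s a) < rank v)
    (hS : ∀ a ∈ S, par (t a) = some a) :
    IsRootedTree s t S r := by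
  have hnr : ∀ p, (∀ a ∈ p, a ∈ S) → ArcWalk s t r p r → p = [] := by
    intro p hps hw
    by_contra hne
    obtain ⟨q, a, rfl, _, hta⟩ := hw.snoc_decomp hne
    have h2 := hS a (hps a (by simp))
    rw [hta, hroot] at h2
    cases h2
  have rcase : (∃ p, (∀ a ∈ p, a ∈ S) ∧ ArcWalk s t r p r) ∧
      (∀ p q, (∀ a ∈ p, a ∈ S) → ArcWalk s t r p r → (∀ a ∈ q, a ∈ S) →
        ArcWalk s t r q r → p = q) :=
    ⟨⟨[], by simp, ArcWalk.nil r⟩,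
     fun p q hps hpw hqs hqw => (hnr p hps hpw).trans (hnr q hqs hqw).symm⟩
  have key : ∀ n (v : V), rank v ≤ n →
      (∃ p, (∀ a ∈ p, a ∈ S) ∧ ArcWalk s t r p v) ∧
      (∀ p q, (∀ a ∈ p, a ∈ S) → ArcWalk s t r p v → (∀ a ∈ q, a ∈ S) →
        ArcWalk s t r q v → p = q) := by
    intro n
    induction n with
    | zero =>
      intro v hv
      rcases eq_or_ne v r with rfl | hvr
      · exact rcase
      · obtain ⟨a, _, _, _, hlt⟩ := hpar v hvr
        omega
    | succ n ih =>
      intro v hv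
      rcases eq_or_ne v r with rfl | hvr
      · exact rcase
      · obtain ⟨a, hpa, haS, hta, hlt⟩ := hpar v hvr
        obtain ⟨⟨p, hps, hpw⟩, huniq⟩ := ih (s a) (by omega)
        constructor
        · refine ⟨p ++ [a], ?_, hta ▸ hpw.append' ArcWalk.single⟩
          intro b hb
          rcases List.mem_append.1 hb with h | h
          · exact hps b h
          · simp at h; subst h; exact haS
        · intro p1 q1 h1s h1 h2s h2
          have hp1 : p1 ≠ [] := fun h => hvr (h ▸ h1).nil_eq.symm
          have hq1 : q1 ≠ [] := fun h => hvr (h ▸ h2).nil_eq.symm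
          obtain ⟨p1', a1, rfl, hw1, hta1⟩ := h1.snoc_decomp hp1
          obtain ⟨q1', a2, rfl, hw2, hta2⟩ := h2.snoc_decomp hq1
          have e1 : par v = some a1 := hta1 ▸ hS a1 (h1s a1 (by simp))
          have e2 : par v = some a2 := hta2 ▸ hS a2 (h2s a2 (by simp))
          have ea1 : a1 = a := by rw [hpa] at e1; exact (Option.some.inj e1).symm
          have ea2 : a2 = a := by rw [hpa] at e2; exact (Option.some.inj e2).symm
          subst ea1; subst ea2
          have : p1' = q1' := huniq p1' q1'
            (fun b hb => h1s b (List.mem_append.2 (Or.inl hb))) hw1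
            (fun b hb => h2s b (List.mem_append.2 (Or.inl hb))) hw2
          rw [this]
  intro v
  obtain ⟨⟨p, hps, hpw⟩, huniq⟩ := key (rank v) v le_rfl
  exact ⟨p, ⟨hps, hpw⟩, fun q hq => huniq q p hq.1 hq.2 hps hpw⟩

end Walks

section Deg
variable {V : Type u2} {A : Type u3}

theorem ncard_eq_filter [Fintype A] (P : A → Prop) [DecidablePred P] :
    {a | P a}.ncard = (Finset.univ.filter P).card := by
  rw [Set.ncard_eq_toFinset_card']; simp [Set.toFinset_setOf]

theorem InDeg_def [Fintype A] [DecidableEq V] (t : A → V) (v : V) :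
    InDeg t v = (Finset.univ.filter (fun a => t a = v)).card := ncard_eq_filter _

theorem OutDeg_def [Fintype A] [DecidableEq V] (s : A → V) (v : V) :
    OutDeg s v = (Finset.univ.filter (fun a => s a = v)).card := ncard_eq_filter _

theorem InDegIn_coe [Fintype A] [DecidableEq A] [DecidableEq V] (t : A → V) (fs : Finset A)
    (v : V) : InDegIn t ↑fs v = (fs.filter (fun a => t a = v)).card := by
  rw [InDegIn, show {a | a ∈ (↑fs : Set A) ∧ t a = v} = ↑(fs.filter (fun a => t a = v)) by
    ext a; simp]
  exact Set.ncard_coe_finset _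

theorem OutDegIn_coe [Fintype A] [DecidableEq A] [DecidableEq V] (s : A → V) (fs : Finset A)
    (v : V) : OutDegIn s ↑fs v = (fs.filter (fun a => s a = v)).card := by
  rw [OutDegIn, show {a | a ∈ (↑fs : Set A) ∧ s a = v} = ↑(fs.filter (fun a => s a = v)) by
    ext a; simp]
  exact Set.ncard_coe_finset _
end Deg

/-! ## The concrete network -/

def Nsrc : Fin 13 → Fin 11 := ![0,0,1,1,2,2,3,3,4,4,5,6,7]
def Ntgt : Fin 13 → Fin 11 := ![7,4,3,6,6,5,5,9,1,7,8,10,2]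
def Nleaf : Fin 3 → Fin 11 := ![8,9,10]
def Nrank : Fin 11 → ℕ := ![0,2,3,3,1,4,4,2,5,4,5]

theorem Nrank_lt : ∀ a, Nrank (Nsrc a) < Nrank (Ntgt a) := by decide

def MyN : PhyloNetwork (Fin 3) (Fin 11) (Fin 13) where
  src := Nsrc
  tgt := Ntgt
  leafEmb := Nleaf
  root := 0
  finV := inferInstance
  finA := inferInstance
  leafEmb_inj := by intro a b h; revert h; revert a b; decide
  acyclic := acyclic_of_rank Nrank_lt
  leaf_iff := by intro v; rw [OutDeg_def]; revert v; decide
  leaf_indeg := by intro x; rw [InDeg_def]; revert x; decide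
  root_indeg := by rw [InDeg_def]; decide
  root_unique := by intro v; rw [InDeg_def]; revert v; decide
  root_outdeg := by rw [OutDeg_def]; decide
  deg_other := by
    intro v h1 h2
    rw [InDeg_def, OutDeg_def]
    revert h2 h1; revert v; decide

theorem isSupportTree_of (fs : Finset (Fin 13)) (par : Fin 11 → Option (Fin 13))
    (h0 : par 0 = none)
    (hpar : ∀ v : Fin 11, v ≠ 0 →
      ∃ a, par v = some a ∧ a ∈ fs ∧ Ntgt a = v ∧ Nrank (Nsrc a) < Nrank v)
    (hfs : ∀ a ∈ fs, par (Ntgt a) = some a)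
    (hout : ∀ v : Fin 11, (fs.filter (fun a => Nsrc a = v)).card = 0 ↔ ∃ x, Nleaf x = v) :
    MyN.IsSupportTree ↑fs := by
  constructor
  · exact isRootedTree_of_parent Nrank par h0
      (by intro v hv; obtain ⟨a, h1, h2, h3, h4⟩ := hpar v hv; exact ⟨a, h1, by simpa using h2, h3, h4⟩)
      (by intro a ha; exact hfs a (by simpa using ha))
  · intro v
    have h := OutDegIn_coe Nsrc fs v
    rw [show OutDegIn MyN.src ↑fs v = OutDegIn Nsrc ↑fs v from rfl, h]
    exact hout v

def SA0 : Finset (Fin 13) := {0,1,2,3,5,7,8,10,11,12}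
def SA1 : Finset (Fin 13) := {0,1,2,4,5,7,8,10,11,12}
def SA2 : Finset (Fin 13) := {0,1,2,4,6,7,8,10,11,12}
def SB0 : Finset (Fin 13) := {1,2,3,5,7,8,9,10,11,12}
def SB1 : Finset (Fin 13) := {1,2,4,5,7,8,9,10,11,12}
def SB2 : Finset (Fin 13) := {1,2,4,6,7,8,9,10,11,12}
def parA0 : Fin 11 → Option (Fin 13) := ![none,some 8,some 12,some 2,some 1,some 5,some 3,some 0,some 10,some 7,some 11]
def parA1 : Fin 11 → Option (Fin 13) := ![none,some 8,some 12,some 2,some 1,some 5,some 4,some 0,some 10,some 7,some 11]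
def parA2 : Fin 11 → Option (Fin 13) := ![none,some 8,some 12,some 2,some 1,some 6,some 4,some 0,some 10,some 7,some 11]
def parB0 : Fin 11 → Option (Fin 13) := ![none,some 8,some 12,some 2,some 1,some 5,some 3,some 9,some 10,some 7,some 11]
def parB1 : Fin 11 → Option (Fin 13) := ![none,some 8,some 12,some 2,some 1,some 5,some 4,some 9,some 10,some 7,some 11]
def parB2 : Fin 11 → Option (Fin 13) := ![none,some 8,some 12,some 2,some 1,some 6,some 4,some 9,some 10,some 7,some 11]

theorem supA0 : MyN.IsSupportTree ↑SA0 :=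
  isSupportTree_of SA0 parA0 rfl (by decide) (by decide) (by decide)
theorem supA1 : MyN.IsSupportTree ↑SA1 :=
  isSupportTree_of SA1 parA1 rfl (by decide) (by decide) (by decide)
theorem supA2 : MyN.IsSupportTree ↑SA2 :=
  isSupportTree_of SA2 parA2 rfl (by decide) (by decide) (by decide)
theorem supB0 : MyN.IsSupportTree ↑SB0 :=
  isSupportTree_of SB0 parB0 rfl (by decide) (by decide) (by decide)
theorem supB1 : MyN.IsSupportTree ↑SB1 :=
  isSupportTree_of SB1 parB1 rfl (by decide) (by decide) (by decide)
theorem supB2 : MyN.IsSupportTree ↑SB2 :=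
  isSupportTree_of SB2 parB2 rfl (by decide) (by decide) (by decide)

theorem Nleaf_inj : Function.Injective Nleaf := by
  intro a b h; revert h; revert a b; decide

theorem basedOn_A {V' : Type u4} {A' : Type u5} (T : PhyloNetwork (Fin 3) V' A')
    (c : V') (i j k : Fin 3) (b1 b2 b3 b4 : A')
    (hb12 : b1 ≠ b2) (hb13 : b1 ≠ b3) (hb14 : b1 ≠ b4)
    (hb23 : b2 ≠ b3) (hb24 : b2 ≠ b4) (hb34 : b3 ≠ b4)
    (hcr : c ≠ T.root) (hcl : ∀ x, c ≠ T.leafEmb x) (hrl : ∀ x, T.root ≠ T.leafEmb x)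
    (hs1 : T.src b1 = T.root) (ht1 : T.tgt b1 = T.leafEmb i)
    (hs2 : T.src b2 = T.root) (ht2 : T.tgt b2 = c)
    (hs3 : T.src b3 = c) (ht3 : T.tgt b3 = T.leafEmb j)
    (hs4 : T.src b4 = c) (ht4 : T.tgt b4 = T.leafEmb k)
    (hVtot : ∀ v : V', v = T.root ∨ v = c ∨ ∃ x, v = T.leafEmb x)
    (hAtot : ∀ e : A', e = b1 ∨ e = b2 ∨ e = b3 ∨ e = b4)
    (fs : Finset (Fin 13)) (hsup : MyN.IsSupportTree ↑fs)
    (vc : Fin 11)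
    (l1 l2 l3 l4 : List (Fin 13))
    (hw1 : ArcWalk Nsrc Ntgt 0 l1 (Nleaf i)) (hw2 : ArcWalk Nsrc Ntgt 0 l2 vc)
    (hw3 : ArcWalk Nsrc Ntgt vc l3 (Nleaf j)) (hw4 : ArcWalk Nsrc Ntgt vc l4 (Nleaf k))
    (hne : l1 ≠ [] ∧ l2 ≠ [] ∧ l3 ≠ [] ∧ l4 ≠ [])
    (hnd : l1.Nodup ∧ l2.Nodup ∧ l3.Nodup ∧ l4.Nodup)
    (hsub : (∀ a ∈ l1, a ∈ fs) ∧ (∀ a ∈ l2, a ∈ fs) ∧ (∀ a ∈ l3, a ∈ fs) ∧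
      (∀ a ∈ l4, a ∈ fs))
    (hdrop : ∀ a ∈ l1.dropLast ++ l2.dropLast ++ l3.dropLast ++ l4.dropLast,
      ¬ (Ntgt a = 0 ∨ Ntgt a = vc ∨ Ntgt a = Nleaf 0 ∨ Ntgt a = Nleaf 1 ∨ Ntgt a = Nleaf 2))
    (hrange : ∀ v : Fin 11,
      (v = 0 ∨ v = vc ∨ v = Nleaf 0 ∨ v = Nleaf 1 ∨ v = Nleaf 2) ↔
      ¬ ((fs.filter (fun a => Ntgt a = v)).card = 1 ∧
         (fs.filter (fun a => Nsrc a = v)).card = 1))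
    (hvc0 : vc ≠ 0) (hvcl : ∀ x, vc ≠ Nleaf x) (h0l : ∀ x, (0 : Fin 11) ≠ Nleaf x)
    (hpart : ∀ a ∈ fs,
      (a ∈ l1 ∧ a ∉ l2 ∧ a ∉ l3 ∧ a ∉ l4) ∨ (a ∉ l1 ∧ a ∈ l2 ∧ a ∉ l3 ∧ a ∉ l4) ∨
      (a ∉ l1 ∧ a ∉ l2 ∧ a ∈ l3 ∧ a ∉ l4) ∨ (a ∉ l1 ∧ a ∉ l2 ∧ a ∉ l3 ∧ a ∈ l4)) :
    BasedOn MyN T := by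
  classical
  set φV : V' → Fin 11 := fun v' =>
    if v' = c then vc
    else if v' = T.leafEmb 0 then Nleaf 0
    else if v' = T.leafEmb 1 then Nleaf 1
    else if v' = T.leafEmb 2 then Nleaf 2
    else 0 with hφV
  have hφc : φV c = vc := by simp [hφV]
  have hφr : φV T.root = 0 := by
    simp only [hφV]
    rw [if_neg (fun h => hcr h.symm), if_neg (hrl 0), if_neg (hrl 1), if_neg (hrl 2)]
  have hinj := T.leafEmb_inj
  have hφl : ∀ x, φV (T.leafEmb x) = Nleaf x := by
    have h0 : φV (T.leafEmb 0) = Nleaf 0 := by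
      simp only [hφV]
      rw [if_neg (fun h => hcl 0 h.symm)]; simp
    have h1 : φV (T.leafEmb 1) = Nleaf 1 := by
      simp only [hφV]
      rw [if_neg (fun h => hcl 1 h.symm),
        if_neg (fun h => absurd (hinj h) (by decide))]; simp
    have h2 : φV (T.leafEmb 2) = Nleaf 2 := by
      simp only [hφV]
      rw [if_neg (fun h => hcl 2 h.symm),
        if_neg (fun h => absurd (hinj h) (by decide)),
        if_neg (fun h => absurd (hinj h) (by decide))]; simp
    intro x
    fin_cases x
    · exact h0
    · exact h1
    · exact h2
  have hRange : Set.range φV = {0, vc, Nleaf 0, Nleaf 1, Nleaf 2} := by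
    ext v
    simp only [Set.mem_range, Set.mem_insert_iff, Set.mem_singleton_iff]
    constructor
    · rintro ⟨v', rfl⟩
      rcases hVtot v' with rfl | rfl | ⟨x, rfl⟩
      · left; exact hφr
      · right; left; exact hφc
      · fin_cases x
        · right; right; left; exact hφl 0
        · right; right; right; left; exact hφl 1
        · right; right; right; right; exact hφl 2
    · rintro (rfl | rfl | rfl | rfl | rfl)
      · exact ⟨T.root, hφr⟩
      · exact ⟨c, hφc⟩
      · exact ⟨T.leafEmb 0, hφl 0⟩
      · exact ⟨T.leafEmb 1, hφl 1⟩
      · exact ⟨T.leafEmb 2, hφl 2⟩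
  have hInj : Function.Injective φV := by
    intro x y hxy
    rcases hVtot x with rfl | rfl | ⟨x0, rfl⟩ <;> rcases hVtot y with rfl | rfl | ⟨y0, rfl⟩
    · rfl
    · rw [hφr, hφc] at hxy; exact absurd hxy.symm hvc0
    · rw [hφr, hφl] at hxy; exact absurd hxy (h0l y0)
    · rw [hφr, hφc] at hxy; exact absurd hxy hvc0
    · rfl
    · rw [hφc, hφl] at hxy; exact absurd hxy (hvcl y0)
    · rw [hφr, hφl] at hxy; exact absurd hxy.symm (h0l x0)
    · rw [hφc, hφl] at hxy; exact absurd hxy.symm (hvcl x0)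
    · rw [hφl, hφl] at hxy; rw [Nleaf_inj hxy]
  set φA : A' → List (Fin 13) := fun e =>
    if e = b1 then l1 else if e = b2 then l2 else if e = b3 then l3 else l4 with hφA
  have hA1 : φA b1 = l1 := by simp [hφA]
  have hA2 : φA b2 = l2 := by simp [hφA, Ne.symm hb12]
  have hA3 : φA b3 = l3 := by simp [hφA, Ne.symm hb13, Ne.symm hb23]
  have hA4 : φA b4 = l4 := by simp [hφA, Ne.symm hb14, Ne.symm hb24, Ne.symm hb34]
  refine ⟨↑fs, φV, hsup, ?_, hφr, hφl⟩
  refine ⟨hInj, fun _ => trivial, fun a _ => ⟨trivial, trivial⟩, ?_, φA, ?_, ?_⟩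
  · intro v _
    rw [hRange]
    have e1 : InDegIn MyN.tgt ↑fs v = (fs.filter (fun a => Ntgt a = v)).card :=
      InDegIn_coe Ntgt fs v
    have e2 : OutDegIn MyN.src ↑fs v = (fs.filter (fun a => Nsrc a = v)).card :=
      OutDegIn_coe Nsrc fs v
    rw [e1, e2]
    simpa only [Set.mem_insert_iff, Set.mem_singleton_iff] using hrange v
  · intro e
    have hmem : ∀ (l : List (Fin 13)), (∀ a ∈ l, a ∈ fs) → ∀ a ∈ l, a ∈ (↑fs : Set (Fin 13)) :=
      fun l hl a ha => by simpa using hl a ha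
    have hdrop' : ∀ (l : List (Fin 13)),
        (∀ a ∈ l1.dropLast ++ l2.dropLast ++ l3.dropLast ++ l4.dropLast, a ∈ l.dropLast → True) →
        True := fun _ _ => trivial
    have hd : ∀ (l : List (Fin 13)), l.dropLast ⊆ l1.dropLast ++ l2.dropLast ++ l3.dropLast ++ l4.dropLast →
        ∀ a ∈ l.dropLast, MyN.tgt a ∉ Set.range φV := by
      intro l hsubl a ha
      rw [hRange]
      intro hmem'
      exact hdrop a (hsubl ha) (by
        simp only [Set.mem_insert_iff, Set.mem_singleton_iff] at hmem'; exact hmem')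
    rcases hAtot e with rfl | rfl | rfl | rfl
    · rw [hA1]
      refine ⟨hne.1, hnd.1, hmem l1 hsub.1, ?_, hd l1 (by intro a ha; simp [ha])⟩
      rw [hs1, ht1, hφr, hφl]; exact hw1
    · rw [hA2]
      refine ⟨hne.2.1, hnd.2.1, hmem l2 hsub.2.1, ?_, hd l2 (by intro a ha; simp [ha])⟩
      rw [hs2, ht2, hφr, hφc]; exact hw2
    · rw [hA3]
      refine ⟨hne.2.2.1, hnd.2.2.1, hmem l3 hsub.2.2.1, ?_, hd l3 (by intro a ha; simp [ha])⟩
      rw [hs3, ht3, hφc, hφl]; exact hw3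
    · rw [hA4]
      refine ⟨hne.2.2.2, hnd.2.2.2, hmem l4 hsub.2.2.2, ?_, hd l4 (by intro a ha; simp [ha])⟩
      rw [hs4, ht4, hφc, hφl]; exact hw4
  · intro a ha
    have ha' : a ∈ fs := by simpa using ha
    have huniq : ∀ (l : List (Fin 13)) (b : A'), φA b = l → a ∈ l →
        (a ∈ l1 → b1 = b) → (a ∈ l2 → b2 = b) → (a ∈ l3 → b3 = b) → (a ∈ l4 → b4 = b) →
        ∃! e, a ∈ φA e := by
      intro l b hb hal h1 h2 h3 h4
      refine ⟨b, show a ∈ φA b by rw [hb]; exact hal, ?_⟩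
      intro e he
      rcases hAtot e with rfl | rfl | rfl | rfl
      · exact h1 (hA1 ▸ he)
      · exact h2 (hA2 ▸ he)
      · exact h3 (hA3 ▸ he)
      · exact h4 (hA4 ▸ he)
    rcases hpart a ha' with ⟨m1, m2, m3, m4⟩ | ⟨m1, m2, m3, m4⟩ | ⟨m1, m2, m3, m4⟩ |
      ⟨m1, m2, m3, m4⟩
    · exact huniq l1 b1 hA1 m1 (fun _ => rfl) (fun h => absurd h m2) (fun h => absurd h m3)
        (fun h => absurd h m4)
    · exact huniq l2 b2 hA2 m2 (fun h => absurd h m1) (fun _ => rfl) (fun h => absurd h m3)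
        (fun h => absurd h m4)
    · exact huniq l3 b3 hA3 m3 (fun h => absurd h m1) (fun h => absurd h m2) (fun _ => rfl)
        (fun h => absurd h m4)
    · exact huniq l4 b4 hA4 m4 (fun h => absurd h m1) (fun h => absurd h m2)
        (fun h => absurd h m3) (fun _ => rfl)

theorem basedOn_B {V' : Type u4} {A' : Type u5} (T : PhyloNetwork (Fin 3) V' A')
    (d c : V') (i j k : Fin 3) (b0 b1 b2 b3 b4 : A')
    (hb01 : b0 ≠ b1) (hb02 : b0 ≠ b2) (hb03 : b0 ≠ b3) (hb04 : b0 ≠ b4)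
    (hb12 : b1 ≠ b2) (hb13 : b1 ≠ b3) (hb14 : b1 ≠ b4)
    (hb23 : b2 ≠ b3) (hb24 : b2 ≠ b4) (hb34 : b3 ≠ b4)
    (hdr : d ≠ T.root) (hdc : d ≠ c) (hdl : ∀ x, d ≠ T.leafEmb x)
    (hcr : c ≠ T.root) (hcl : ∀ x, c ≠ T.leafEmb x) (hrl : ∀ x, T.root ≠ T.leafEmb x)
    (hs0 : T.src b0 = T.root) (ht0 : T.tgt b0 = d)
    (hs1 : T.src b1 = d) (ht1 : T.tgt b1 = T.leafEmb i)
    (hs2 : T.src b2 = d) (ht2 : T.tgt b2 = c)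
    (hs3 : T.src b3 = c) (ht3 : T.tgt b3 = T.leafEmb j)
    (hs4 : T.src b4 = c) (ht4 : T.tgt b4 = T.leafEmb k)
    (hVtot : ∀ v : V', v = T.root ∨ v = d ∨ v = c ∨ ∃ x, v = T.leafEmb x)
    (hAtot : ∀ e : A', e = b0 ∨ e = b1 ∨ e = b2 ∨ e = b3 ∨ e = b4)
    (fs : Finset (Fin 13)) (hsup : MyN.IsSupportTree ↑fs)
    (vd vc : Fin 11)
    (l0 l1 l2 l3 l4 : List (Fin 13))
    (hw0 : ArcWalk Nsrc Ntgt 0 l0 vd)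
    (hw1 : ArcWalk Nsrc Ntgt vd l1 (Nleaf i)) (hw2 : ArcWalk Nsrc Ntgt vd l2 vc)
    (hw3 : ArcWalk Nsrc Ntgt vc l3 (Nleaf j)) (hw4 : ArcWalk Nsrc Ntgt vc l4 (Nleaf k))
    (hne : l0 ≠ [] ∧ l1 ≠ [] ∧ l2 ≠ [] ∧ l3 ≠ [] ∧ l4 ≠ [])
    (hnd : l0.Nodup ∧ l1.Nodup ∧ l2.Nodup ∧ l3.Nodup ∧ l4.Nodup)
    (hsub : (∀ a ∈ l0, a ∈ fs) ∧ (∀ a ∈ l1, a ∈ fs) ∧ (∀ a ∈ l2, a ∈ fs) ∧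
      (∀ a ∈ l3, a ∈ fs) ∧ (∀ a ∈ l4, a ∈ fs))
    (hdrop : ∀ a ∈ l0.dropLast ++ l1.dropLast ++ l2.dropLast ++ l3.dropLast ++ l4.dropLast,
      ¬ (Ntgt a = 0 ∨ Ntgt a = vd ∨ Ntgt a = vc ∨ Ntgt a = Nleaf 0 ∨ Ntgt a = Nleaf 1 ∨
        Ntgt a = Nleaf 2))
    (hrange : ∀ v : Fin 11,
      (v = 0 ∨ v = vd ∨ v = vc ∨ v = Nleaf 0 ∨ v = Nleaf 1 ∨ v = Nleaf 2) ↔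
      ¬ ((fs.filter (fun a => Ntgt a = v)).card = 1 ∧
         (fs.filter (fun a => Nsrc a = v)).card = 1))
    (hvd0 : vd ≠ 0) (hvc0 : vc ≠ 0) (hvdc : vd ≠ vc)
    (hvdl : ∀ x, vd ≠ Nleaf x) (hvcl : ∀ x, vc ≠ Nleaf x) (h0l : ∀ x, (0 : Fin 11) ≠ Nleaf x)
    (hpart : ∀ a ∈ fs,
      (a ∈ l0 ∧ a ∉ l1 ∧ a ∉ l2 ∧ a ∉ l3 ∧ a ∉ l4) ∨
      (a ∉ l0 ∧ a ∈ l1 ∧ a ∉ l2 ∧ a ∉ l3 ∧ a ∉ l4) ∨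
      (a ∉ l0 ∧ a ∉ l1 ∧ a ∈ l2 ∧ a ∉ l3 ∧ a ∉ l4) ∨
      (a ∉ l0 ∧ a ∉ l1 ∧ a ∉ l2 ∧ a ∈ l3 ∧ a ∉ l4) ∨
      (a ∉ l0 ∧ a ∉ l1 ∧ a ∉ l2 ∧ a ∉ l3 ∧ a ∈ l4)) :
    BasedOn MyN T := by
  classical
  set φV : V' → Fin 11 := fun v' =>
    if v' = c then vc
    else if v' = d then vd
    else if v' = T.leafEmb 0 then Nleaf 0
    else if v' = T.leafEmb 1 then Nleaf 1
    else if v' = T.leafEmb 2 then Nleaf 2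
    else 0 with hφV
  have hφc : φV c = vc := by simp [hφV]
  have hφd : φV d = vd := by
    simp only [hφV]
    rw [if_neg hdc]; simp
  have hφr : φV T.root = 0 := by
    simp only [hφV]
    rw [if_neg (fun h => hcr h.symm), if_neg (fun h => hdr h.symm),
      if_neg (hrl 0), if_neg (hrl 1), if_neg (hrl 2)]
  have hinj := T.leafEmb_inj
  have hφl : ∀ x, φV (T.leafEmb x) = Nleaf x := by
    have h0 : φV (T.leafEmb 0) = Nleaf 0 := by
      simp only [hφV]
      rw [if_neg (fun h => hcl 0 h.symm), if_neg (fun h => hdl 0 h.symm)]; simp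
    have h1 : φV (T.leafEmb 1) = Nleaf 1 := by
      simp only [hφV]
      rw [if_neg (fun h => hcl 1 h.symm), if_neg (fun h => hdl 1 h.symm),
        if_neg (fun h => absurd (hinj h) (by decide))]; simp
    have h2 : φV (T.leafEmb 2) = Nleaf 2 := by
      simp only [hφV]
      rw [if_neg (fun h => hcl 2 h.symm), if_neg (fun h => hdl 2 h.symm),
        if_neg (fun h => absurd (hinj h) (by decide)),
        if_neg (fun h => absurd (hinj h) (by decide))]; simp
    intro x
    fin_cases x
    · exact h0
    · exact h1
    · exact h2
  have hRange : Set.range φV = {0, vd, vc, Nleaf 0, Nleaf 1, Nleaf 2} := by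
    ext v
    simp only [Set.mem_range, Set.mem_insert_iff, Set.mem_singleton_iff]
    constructor
    · rintro ⟨v', rfl⟩
      rcases hVtot v' with rfl | rfl | rfl | ⟨x, rfl⟩
      · left; exact hφr
      · right; left; exact hφd
      · right; right; left; exact hφc
      · fin_cases x
        · right; right; right; left; exact hφl 0
        · right; right; right; right; left; exact hφl 1
        · right; right; right; right; right; exact hφl 2
    · rintro (rfl | rfl | rfl | rfl | rfl | rfl)
      · exact ⟨T.root, hφr⟩
      · exact ⟨d, hφd⟩
      · exact ⟨c, hφc⟩
      · exact ⟨T.leafEmb 0, hφl 0⟩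
      · exact ⟨T.leafEmb 1, hφl 1⟩
      · exact ⟨T.leafEmb 2, hφl 2⟩
  have hInj : Function.Injective φV := by
    intro x y hxy
    rcases hVtot x with rfl | rfl | rfl | ⟨x0, rfl⟩ <;>
      rcases hVtot y with rfl | rfl | rfl | ⟨y0, rfl⟩
    · rfl
    · rw [hφr, hφd] at hxy; exact absurd hxy.symm hvd0
    · rw [hφr, hφc] at hxy; exact absurd hxy.symm hvc0
    · rw [hφr, hφl] at hxy; exact absurd hxy (h0l y0)
    · rw [hφr, hφd] at hxy; exact absurd hxy hvd0
    · rfl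
    · rw [hφd, hφc] at hxy; exact absurd hxy hvdc
    · rw [hφd, hφl] at hxy; exact absurd hxy (hvdl y0)
    · rw [hφr, hφc] at hxy; exact absurd hxy hvc0
    · rw [hφd, hφc] at hxy; exact absurd hxy.symm hvdc
    · rfl
    · rw [hφc, hφl] at hxy; exact absurd hxy (hvcl y0)
    · rw [hφr, hφl] at hxy; exact absurd hxy.symm (h0l x0)
    · rw [hφd, hφl] at hxy; exact absurd hxy.symm (hvdl x0)
    · rw [hφc, hφl] at hxy; exact absurd hxy.symm (hvcl x0)
    · rw [hφl, hφl] at hxy; rw [Nleaf_inj hxy]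
  set φA : A' → List (Fin 13) := fun e =>
    if e = b0 then l0 else if e = b1 then l1 else if e = b2 then l2
    else if e = b3 then l3 else l4 with hφA
  have hA0 : φA b0 = l0 := by simp [hφA]
  have hA1 : φA b1 = l1 := by simp [hφA, Ne.symm hb01]
  have hA2 : φA b2 = l2 := by simp [hφA, Ne.symm hb02, Ne.symm hb12]
  have hA3 : φA b3 = l3 := by simp [hφA, Ne.symm hb03, Ne.symm hb13, Ne.symm hb23]
  have hA4 : φA b4 = l4 := by
    simp [hφA, Ne.symm hb04, Ne.symm hb14, Ne.symm hb24, Ne.symm hb34]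
  refine ⟨↑fs, φV, hsup, ?_, hφr, hφl⟩
  refine ⟨hInj, fun _ => trivial, fun a _ => ⟨trivial, trivial⟩, ?_, φA, ?_, ?_⟩
  · intro v _
    rw [hRange]
    have e1 : InDegIn MyN.tgt ↑fs v = (fs.filter (fun a => Ntgt a = v)).card :=
      InDegIn_coe Ntgt fs v
    have e2 : OutDegIn MyN.src ↑fs v = (fs.filter (fun a => Nsrc a = v)).card :=
      OutDegIn_coe Nsrc fs v
    rw [e1, e2]
    simpa only [Set.mem_insert_iff, Set.mem_singleton_iff] using hrange v
  · intro e
    have hmem : ∀ (l : List (Fin 13)), (∀ a ∈ l, a ∈ fs) → ∀ a ∈ l, a ∈ (↑fs : Set (Fin 13)) :=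
      fun l hl a ha => by simpa using hl a ha
    have hd : ∀ (l : List (Fin 13)),
        l.dropLast ⊆ l0.dropLast ++ l1.dropLast ++ l2.dropLast ++ l3.dropLast ++ l4.dropLast →
        ∀ a ∈ l.dropLast, MyN.tgt a ∉ Set.range φV := by
      intro l hsubl a ha
      rw [hRange]
      intro hmem'
      exact hdrop a (hsubl ha) (by
        simp only [Set.mem_insert_iff, Set.mem_singleton_iff] at hmem'; exact hmem')
    rcases hAtot e with rfl | rfl | rfl | rfl | rfl
    · rw [hA0]
      refine ⟨hne.1, hnd.1, hmem l0 hsub.1, ?_, hd l0 (by intro a ha; simp [ha])⟩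
      rw [hs0, ht0, hφr, hφd]; exact hw0
    · rw [hA1]
      refine ⟨hne.2.1, hnd.2.1, hmem l1 hsub.2.1, ?_, hd l1 (by intro a ha; simp [ha])⟩
      rw [hs1, ht1, hφd, hφl]; exact hw1
    · rw [hA2]
      refine ⟨hne.2.2.1, hnd.2.2.1, hmem l2 hsub.2.2.1, ?_, hd l2 (by intro a ha; simp [ha])⟩
      rw [hs2, ht2, hφd, hφc]; exact hw2
    · rw [hA3]
      refine ⟨hne.2.2.2.1, hnd.2.2.2.1, hmem l3 hsub.2.2.2.1, ?_,
        hd l3 (by intro a ha; simp [ha])⟩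
      rw [hs3, ht3, hφc, hφl]; exact hw3
    · rw [hA4]
      refine ⟨hne.2.2.2.2, hnd.2.2.2.2, hmem l4 hsub.2.2.2.2, ?_,
        hd l4 (by intro a ha; simp [ha])⟩
      rw [hs4, ht4, hφc, hφl]; exact hw4
  · intro a ha
    have ha' : a ∈ fs := by simpa using ha
    have huniq : ∀ (l : List (Fin 13)) (b : A'), φA b = l → a ∈ l →
        (a ∈ l0 → b0 = b) → (a ∈ l1 → b1 = b) → (a ∈ l2 → b2 = b) → (a ∈ l3 → b3 = b) →
        (a ∈ l4 → b4 = b) → ∃! e, a ∈ φA e := by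
      intro l b hb hal h0 h1 h2 h3 h4
      refine ⟨b, show a ∈ φA b by rw [hb]; exact hal, ?_⟩
      intro e he
      rcases hAtot e with rfl | rfl | rfl | rfl | rfl
      · exact h0 (hA0 ▸ he)
      · exact h1 (hA1 ▸ he)
      · exact h2 (hA2 ▸ he)
      · exact h3 (hA3 ▸ he)
      · exact h4 (hA4 ▸ he)
    rcases hpart a ha' with ⟨m0, m1, m2, m3, m4⟩ | ⟨m0, m1, m2, m3, m4⟩ |
      ⟨m0, m1, m2, m3, m4⟩ | ⟨m0, m1, m2, m3, m4⟩ | ⟨m0, m1, m2, m3, m4⟩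
    · exact huniq l0 b0 hA0 m0 (fun _ => rfl) (fun h => absurd h m1) (fun h => absurd h m2)
        (fun h => absurd h m3) (fun h => absurd h m4)
    · exact huniq l1 b1 hA1 m1 (fun h => absurd h m0) (fun _ => rfl) (fun h => absurd h m2)
        (fun h => absurd h m3) (fun h => absurd h m4)
    · exact huniq l2 b2 hA2 m2 (fun h => absurd h m0) (fun h => absurd h m1) (fun _ => rfl)
        (fun h => absurd h m3) (fun h => absurd h m4)
    · exact huniq l3 b3 hA3 m3 (fun h => absurd h m0) (fun h => absurd h m1)
        (fun h => absurd h m2) (fun _ => rfl) (fun h => absurd h m4)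
    · exact huniq l4 b4 hA4 m4 (fun h => absurd h m0) (fun h => absurd h m1)
        (fun h => absurd h m2) (fun h => absurd h m3) (fun _ => rfl)

/-! ## Classification of rooted binary phylogenetic trees on 3 leaves -/

section Classify
variable {V' : Type u4} {A' : Type u5} (T : PhyloNetwork (Fin 3) V' A')

theorem root_not_leaf : ∀ x, T.root ≠ T.leafEmb x := by
  intro x h
  have h0 : OutDeg T.src T.root = 0 := (T.leaf_iff T.root).1 ⟨x, h.symm⟩
  rcases T.root_outdeg with h1 | h1 <;> omega

theorem no_arc_into_root : ∀ a : A', T.tgt a ≠ T.root := by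
  have := T.finA
  intro a h
  have h0 := T.root_indeg
  rw [InDeg, Set.ncard_eq_zero (Set.toFinite _)] at h0
  exact absurd h0 (Set.nonempty_iff_ne_empty.1 ⟨a, h⟩)

theorem no_arc_from_leaf : ∀ (x : Fin 3) (a : A'), T.src a ≠ T.leafEmb x := by
  have := T.finA
  intro x a h
  have h0 : OutDeg T.src (T.leafEmb x) = 0 := (T.leaf_iff _).1 ⟨x, rfl⟩
  rw [OutDeg, Set.ncard_eq_zero (Set.toFinite _)] at h0
  exact absurd h0 (Set.nonempty_iff_ne_empty.1 ⟨a, h⟩)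

theorem walk_from_leaf {x : Fin 3} {p : List A'} {v : V'}
    (h : ArcWalk T.src T.tgt (T.leafEmb x) p v) : p = [] ∧ v = T.leafEmb x := by
  cases h with
  | nil => exact ⟨rfl, rfl⟩
  | cons hs _ => exact absurd hs (no_arc_from_leaf T _ _)

theorem indeg_one_of_ne_root (hT : IsPhyloTree T) :
    ∀ v : V', v ≠ T.root → InDeg T.tgt v = 1 := by
  intro v hv
  by_cases hL : ∃ x, T.leafEmb x = v
  · obtain ⟨x, rfl⟩ := hL
    exact T.leaf_indeg x
  · rcases T.deg_other v hv hL with ⟨h1, _⟩ | ⟨h1, _⟩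
    · exact absurd h1 (hT v)
    · exact h1

theorem unique_in_arc (hT : IsPhyloTree T) {v : V'} (hv : v ≠ T.root) :
    ∃ a : A', T.tgt a = v ∧ ∀ b : A', T.tgt b = v → b = a := by
  have h := indeg_one_of_ne_root T hT v hv
  rw [InDeg, Set.ncard_eq_one] at h
  obtain ⟨a, ha⟩ := h
  refine ⟨a, ?_, ?_⟩
  · have : a ∈ {b : A' | T.tgt b = v} := ha ▸ rfl
    exact this
  · intro b hb
    have : b ∈ ({a} : Set A') := ha ▸ hb
    exact this

theorem outdeg_two_of_internal (hT : IsPhyloTree T) {v : V'} (hv : v ≠ T.root)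
    (hL : ¬ ∃ x, T.leafEmb x = v) : ∃ a b : A', a ≠ b ∧ {e : A' | T.src e = v} = {a, b} := by
  rcases T.deg_other v hv hL with ⟨h1, _⟩ | ⟨_, h2⟩
  · exact absurd h1 (hT v)
  · rw [OutDeg, Set.ncard_eq_two] at h2
    obtain ⟨a, b, hab, hset⟩ := h2
    exact ⟨a, b, hab, hset⟩

/-- uniqueness of walks from the root -/
theorem walk_unique (hT : IsPhyloTree T) :
    ∀ (p : List A') (v : V') (q : List A'), ArcWalk T.src T.tgt T.root p v →
      ArcWalk T.src T.tgt T.root q v → p = q := by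
  have main : ∀ (n : ℕ) (p : List A'), p.length ≤ n → ∀ (v : V') (q : List A'),
      ArcWalk T.src T.tgt T.root p v → ArcWalk T.src T.tgt T.root q v → p = q := by
    intro n
    induction n with
    | zero =>
      intro p hp v q hpw hqw
      have hp0 : p = [] := List.length_eq_zero_iff.1 (by omega)
      subst hp0
      have hv : T.root = v := hpw.nil_eq
      subst hv
      by_contra hq
      obtain ⟨q', b, rfl, _, htb⟩ := hqw.snoc_decomp (fun h => hq (h ▸ rfl) )
      exact no_arc_into_root T b htb
    | succ n ih =>
      intro p hp v q hpw hqw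
      rcases eq_or_ne p [] with rfl | hpne
      · have hv : T.root = v := hpw.nil_eq
        subst hv
        by_contra hq
        obtain ⟨q', b, rfl, _, htb⟩ := hqw.snoc_decomp (fun h => hq (h ▸ rfl))
        exact no_arc_into_root T b htb
      · have hvr : v ≠ T.root := by
          rintro rfl
          obtain ⟨p', a, rfl, _, hta⟩ := hpw.snoc_decomp hpne
          exact no_arc_into_root T a hta
        have hqne : q ≠ [] := by
          rintro rfl
          exact hvr hqw.nil_eq.symm
        obtain ⟨p', a, rfl, hw1, hta⟩ := hpw.snoc_decomp hpne
        obtain ⟨q', b, rfl, hw2, htb⟩ := hqw.snoc_decomp hqne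
        obtain ⟨e, hte, hue⟩ := unique_in_arc T hT hvr
        have hab : a = b := (hue a hta).trans (hue b htb).symm
        subst hab
        have hlen : p'.length ≤ n := by
          simp only [List.length_append, List.length_singleton] at hp
          omega
        rw [ih p' hlen (T.src a) q' hw1 hw2]
  intro p v q hpw hqw
  exact main p.length p le_rfl v q hpw hqw

/-- every vertex is reachable from the root -/
theorem reach_from_root (hT : IsPhyloTree T) :
    ∀ v : V', ∃ p : List A', ArcWalk T.src T.tgt T.root p v := by
  have := T.finV
  have := T.finA
  let R : V' → V' → Prop := fun x y => ∃ p, p ≠ [] ∧ ArcWalk T.src T.tgt x p y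
  have htrans : Transitive R := by
    rintro x y z ⟨p, hp, hpw⟩ ⟨q, hq, hqw⟩
    exact ⟨p ++ q, by simp [hp], hpw.append' hqw⟩
  have hirr : ∀ x, ¬ R x x := by
    rintro x ⟨p, hp, hpw⟩
    exact T.acyclic x p hp hpw
  have hwf : WellFounded R := by
    have : IsTrans V' R := ⟨fun _ _ _ h1 h2 => htrans h1 h2⟩
    have : IsIrrefl V' R := ⟨hirr⟩
    exact Finite.wellFounded_of_trans_of_irrefl R
  intro v
  induction v using hwf.induction with
  | _ v ih =>
    rcases eq_or_ne v T.root with rfl | hv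
    · exact ⟨[], ArcWalk.nil _⟩
    · obtain ⟨a, hta, _⟩ := unique_in_arc T hT hv
      obtain ⟨p, hpw⟩ := ih (T.src a) ⟨[a], by simp, hta ▸ ArcWalk.single⟩
      exact ⟨p ++ [a], hta ▸ hpw.append' ArcWalk.single⟩

/-- every vertex has a directed path to a leaf -/
theorem reach_leaf (hT : IsPhyloTree T) :
    ∀ v : V', ∃ (p : List A') (x : Fin 3), ArcWalk T.src T.tgt v p (T.leafEmb x) := by
  have := T.finV
  have := T.finA
  let R : V' → V' → Prop := fun x y => ∃ p, p ≠ [] ∧ ArcWalk T.src T.tgt y p x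
  have hwf : WellFounded R := by
    have : IsTrans V' R := ⟨by
      rintro x y z ⟨p, hp, hpw⟩ ⟨q, hq, hqw⟩
      exact ⟨q ++ p, by simp [hq], hqw.append' hpw⟩⟩
    have : IsIrrefl V' R := ⟨by
      rintro x ⟨p, hp, hpw⟩
      exact T.acyclic x p hp hpw⟩
    exact Finite.wellFounded_of_trans_of_irrefl R
  intro v
  induction v using hwf.induction with
  | _ v ih =>
    by_cases hL : ∃ x, T.leafEmb x = v
    · obtain ⟨x, rfl⟩ := hL
      exact ⟨[], x, ArcWalk.nil _⟩
    · have hod : OutDeg T.src v ≠ 0 := by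
        rcases eq_or_ne v T.root with rfl | hv
        · rcases T.root_outdeg with h | h <;> omega
        · rcases T.deg_other v hv hL with ⟨_, h⟩ | ⟨_, h⟩ <;> omega
      have hne : {a : A' | T.src a = v}.Nonempty := by
        rw [OutDeg] at hod
        by_contra h
        rw [Set.not_nonempty_iff_eq_empty] at h
        rw [h] at hod
        simp at hod
      obtain ⟨a, ha⟩ := hne
      obtain ⟨p, x, hpw⟩ := ih (T.tgt a) ⟨[a], by simp, ha ▸ ArcWalk.single⟩
      exact ⟨a :: p, x, ArcWalk.cons ha hpw⟩

end Classify

theorem fin3_four : ∀ y1 y2 y3 y4 : Fin 3,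
    y1 = y2 ∨ y1 = y3 ∨ y1 = y4 ∨ y2 = y3 ∨ y2 = y4 ∨ y3 = y4 := by decide

theorem fin3_third : ∀ x1 x2 : Fin 3, ∃ y, y ≠ x1 ∧ y ≠ x2 := by decide

section Classify2
variable {V' : Type u4} {A' : Type u5} (T : PhyloNetwork (Fin 3) V' A')

theorem branch_core (hT : IsPhyloTree T)
    (z : V') (aL aC : A') (hLC : aL ≠ aC)
    (hout : {e : A' | T.src e = z} = {aL, aC})
    (huniq : ∀ (p : List A') (v : V') (q : List A'), ArcWalk T.src T.tgt z p v →
      ArcWalk T.src T.tgt z q v → p = q)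
    (i : Fin 3) (hLi : T.tgt aL = T.leafEmb i)
    (hC : ¬ ∃ x, T.leafEmb x = T.tgt aC) :
    ∃ (c : V') (j k : Fin 3) (b3 b4 : A'),
      j ≠ k ∧ i ≠ j ∧ i ≠ k ∧ b3 ≠ b4 ∧
      c ≠ z ∧ T.tgt aC = c ∧ (∀ x, c ≠ T.leafEmb x) ∧
      T.src b3 = c ∧ T.tgt b3 = T.leafEmb j ∧ T.src b4 = c ∧ T.tgt b4 = T.leafEmb k ∧
      {e : A' | T.src e = c} = {b3, b4} ∧
      (∀ (v : V') (p : List A'), ArcWalk T.src T.tgt z p v →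
        v = z ∨ v = c ∨ ∃ x, v = T.leafEmb x) := by
  have hsL : T.src aL = z := by
    have : aL ∈ {e : A' | T.src e = z} := by rw [hout]; simp
    exact this
  have hsC : T.src aC = z := by
    have : aC ∈ {e : A' | T.src e = z} := by rw [hout]; simp
    exact this
  set c := T.tgt aC with hc
  have hcz : c ≠ z := by
    intro h
    exact T.acyclic z [aC] (by simp) (ArcWalk.cons' hsC h (ArcWalk.nil z))
  have hcr : c ≠ T.root := fun h => no_arc_into_root T aC (hc ▸ h)
  have hclx : ∀ x, c ≠ T.leafEmb x := fun x h => hC ⟨x, h.symm⟩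
  obtain ⟨b3, b4, hb34, houtc⟩ := outdeg_two_of_internal T hT hcr (fun ⟨x, h⟩ => hC ⟨x, h⟩)
  have hs3 : T.src b3 = c := by
    have : b3 ∈ {e : A' | T.src e = c} := by rw [houtc]; simp
    exact this
  have hs4 : T.src b4 = c := by
    have : b4 ∈ {e : A' | T.src e = c} := by rw [houtc]; simp
    exact this
  -- both grandchildren are leaves
  have key : ∀ bb cc : A', bb ≠ cc → {b3, b4} = ({bb, cc} : Set A') →
      T.src bb = c → T.src cc = c → ∃ j, T.tgt bb = T.leafEmb j := by
    intro bb cc hbc hpair hsb hsc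
    by_contra hnl
    push_neg at hnl
    have hwr : T.tgt bb ≠ T.root := fun h => no_arc_into_root T bb h
    obtain ⟨d1, d2, hd12, houtw⟩ := outdeg_two_of_internal T hT hwr
      (fun ⟨x, hx⟩ => hnl x hx.symm)
    have hsd1 : T.src d1 = T.tgt bb := by
      have : d1 ∈ {e : A' | T.src e = T.tgt bb} := by rw [houtw]; simp
      exact this
    have hsd2 : T.src d2 = T.tgt bb := by
      have : d2 ∈ {e : A' | T.src e = T.tgt bb} := by rw [houtw]; simp
      exact this
    obtain ⟨p1, y1, hw1⟩ := reach_leaf T hT (T.tgt d1)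
    obtain ⟨p2, y2, hw2⟩ := reach_leaf T hT (T.tgt d2)
    obtain ⟨p3, y3, hw3⟩ := reach_leaf T hT (T.tgt cc)
    have W1 : ArcWalk T.src T.tgt z (aC :: bb :: d1 :: p1) (T.leafEmb y1) :=
      ArcWalk.cons' hsC rfl (ArcWalk.cons' hsb rfl (ArcWalk.cons hsd1 hw1))
    have W2 : ArcWalk T.src T.tgt z (aC :: bb :: d2 :: p2) (T.leafEmb y2) :=
      ArcWalk.cons' hsC rfl (ArcWalk.cons' hsb rfl (ArcWalk.cons hsd2 hw2))
    have W3 : ArcWalk T.src T.tgt z (aC :: cc :: p3) (T.leafEmb y3) :=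
      ArcWalk.cons' hsC rfl (ArcWalk.cons hsc hw3)
    have WL : ArcWalk T.src T.tgt z [aL] (T.leafEmb i) :=
      ArcWalk.single' hsL hLi
    have hy12 : y1 ≠ y2 := by
      rintro rfl
      have := huniq _ _ _ W1 W2
      simp only [List.cons.injEq] at this
      exact hd12 this.2.2.1
    have hy13 : y1 ≠ y3 := by
      rintro rfl
      have := huniq _ _ _ W1 W3
      simp only [List.cons.injEq] at this
      exact hbc this.2.1
    have hy23 : y2 ≠ y3 := by
      rintro rfl
      have := huniq _ _ _ W2 W3
      simp only [List.cons.injEq] at this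
      exact hbc this.2.1
    have hy1i : y1 ≠ i := by
      rintro rfl
      have := huniq _ _ _ W1 WL
      simp at this
    have hy2i : y2 ≠ i := by
      rintro rfl
      have := huniq _ _ _ W2 WL
      simp at this
    have hy3i : y3 ≠ i := by
      rintro rfl
      have := huniq _ _ _ W3 WL
      simp at this
    rcases fin3_four y1 y2 y3 i with h|h|h|h|h|h
    · exact hy12 h
    · exact hy13 h
    · exact hy1i h
    · exact hy23 h
    · exact hy2i h
    · exact hy3i h
  obtain ⟨j, htj⟩ := key b3 b4 hb34 rfl hs3 hs4
  obtain ⟨k, htk⟩ := key b4 b3 (Ne.symm hb34) (Set.pair_comm b3 b4) hs4 hs3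
  have hjk : j ≠ k := by
    rintro rfl
    have htw : T.tgt b3 = T.tgt b4 := htj.trans htk.symm
    have hne : T.tgt b3 ≠ T.root := fun h => no_arc_into_root T b3 h
    obtain ⟨e, hte, hue⟩ := unique_in_arc T hT hne
    exact hb34 ((hue b3 rfl).trans (hue b4 htw.symm).symm)
  have WL : ArcWalk T.src T.tgt z [aL] (T.leafEmb i) := ArcWalk.single' hsL hLi
  have W3 : ArcWalk T.src T.tgt z [aC, b3] (T.leafEmb j) :=
    ArcWalk.cons' hsC rfl (ArcWalk.single' hs3 htj)
  have W4 : ArcWalk T.src T.tgt z [aC, b4] (T.leafEmb k) :=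
    ArcWalk.cons' hsC rfl (ArcWalk.single' hs4 htk)
  have hij : i ≠ j := by
    rintro rfl
    have := huniq _ _ _ WL W3
    simp at this
  have hik : i ≠ k := by
    rintro rfl
    have := huniq _ _ _ WL W4
    simp at this
  refine ⟨c, j, k, b3, b4, hjk, hij, hik, hb34, hcz, rfl, hclx, hs3, htj, hs4, htk, houtc, ?_⟩
  intro v p hw
  cases hw with
  | nil => exact Or.inl rfl
  | @cons _ _ a p' hsa hw' =>
    have ha : a ∈ ({aL, aC} : Set A') := hout ▸ hsa
    rcases ha with rfl | rfl
    · obtain ⟨_, rfl⟩ := walk_from_leaf T (hLi ▸ hw')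
      exact Or.inr (Or.inr ⟨i, rfl⟩)
    · cases hw' with
      | nil => exact Or.inr (Or.inl rfl)
      | @cons _ _ b p'' hsb hw'' =>
        have hb : b ∈ ({b3, b4} : Set A') := houtc ▸ hsb
        rcases hb with rfl | rfl
        · obtain ⟨_, rfl⟩ := walk_from_leaf T (htj ▸ hw'')
          exact Or.inr (Or.inr ⟨j, rfl⟩)
        · obtain ⟨_, rfl⟩ := walk_from_leaf T (htk ▸ hw'')
          exact Or.inr (Or.inr ⟨k, rfl⟩)

end Classify2

section Classify3
variable {V' : Type u4} {A' : Type u5} (T : PhyloNetwork (Fin 3) V' A')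

theorem branch_data (hT : IsPhyloTree T)
    (z : V') (a1 a2 : A') (h12 : a1 ≠ a2)
    (hout : {e : A' | T.src e = z} = {a1, a2})
    (huniq : ∀ (p : List A') (v : V') (q : List A'), ArcWalk T.src T.tgt z p v →
      ArcWalk T.src T.tgt z q v → p = q)
    (hleafreach : ∀ y : Fin 3, ∃ p, ArcWalk T.src T.tgt z p (T.leafEmb y)) :
    ∃ (c : V') (i j k : Fin 3) (b1 b2 b3 b4 : A'),
      j ≠ k ∧ i ≠ j ∧ i ≠ k ∧
      b1 ≠ b2 ∧ b1 ≠ b3 ∧ b1 ≠ b4 ∧ b2 ≠ b3 ∧ b2 ≠ b4 ∧ b3 ≠ b4 ∧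
      c ≠ z ∧ (∀ x, c ≠ T.leafEmb x) ∧
      T.src b1 = z ∧ T.tgt b1 = T.leafEmb i ∧ T.src b2 = z ∧ T.tgt b2 = c ∧
      T.src b3 = c ∧ T.tgt b3 = T.leafEmb j ∧ T.src b4 = c ∧ T.tgt b4 = T.leafEmb k ∧
      ({a1, a2} : Set A') = {b1, b2} ∧ {e : A' | T.src e = c} = {b3, b4} ∧
      (∀ (v : V') (p : List A'), ArcWalk T.src T.tgt z p v →
        v = z ∨ v = c ∨ ∃ x, v = T.leafEmb x) := by
  have hs1 : T.src a1 = z := by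
    have : a1 ∈ {e : A' | T.src e = z} := by rw [hout]; simp
    exact this
  have hs2 : T.src a2 = z := by
    have : a2 ∈ {e : A' | T.src e = z} := by rw [hout]; simp
    exact this
  have hznl : ∀ y : Fin 3, z ≠ T.leafEmb y :=
    fun y h => no_arc_from_leaf T y a1 (h ▸ hs1)
  by_cases hL1 : ∃ x, T.leafEmb x = T.tgt a1 <;> by_cases hL2 : ∃ x, T.leafEmb x = T.tgt a2
  · -- both children leaves: contradiction
    exfalso
    obtain ⟨x1, hx1⟩ := hL1
    obtain ⟨x2, hx2⟩ := hL2
    obtain ⟨y, hy1, hy2⟩ := fin3_third x1 x2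
    obtain ⟨p, hw⟩ := hleafreach y
    cases hw with
    | nil => exact hznl y rfl
    | @cons _ _ a p' hsa hw' =>
      have ha : a ∈ ({a1, a2} : Set A') := hout ▸ hsa
      rcases ha with rfl | rfl
      · obtain ⟨_, hv⟩ := walk_from_leaf T (hx1 ▸ hw')
        exact hy1 (T.leafEmb_inj hv)
      · obtain ⟨_, hv⟩ := walk_from_leaf T (hx2 ▸ hw')
        exact hy2 (T.leafEmb_inj hv)
  · -- a1 child is the lone leaf
    obtain ⟨i, hx1⟩ := hL1
    obtain ⟨c, j, k, b3, b4, hjk, hij, hik, hb34, hcz, hcC, hclx, hs3, ht3, hs4, ht4, houtc,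
      htot⟩ := branch_core T hT z a1 a2 h12 hout huniq i hx1.symm hL2
    have h13 : a1 ≠ b3 := fun h => hcz (by rw [← hs3, ← h]; exact hs1)
    have h14 : a1 ≠ b4 := fun h => hcz (by rw [← hs4, ← h]; exact hs1)
    have h23 : a2 ≠ b3 := fun h => hcz (by rw [← hs3, ← h]; exact hs2)
    have h24 : a2 ≠ b4 := fun h => hcz (by rw [← hs4, ← h]; exact hs2)
    exact ⟨c, i, j, k, a1, a2, b3, b4, hjk, hij, hik, h12, h13, h14, h23, h24, hb34,
      hcz, hclx, hs1, hx1.symm, hs2, hcC, hs3, ht3, hs4, ht4, rfl, houtc, htot⟩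
  · -- a2 child is the lone leaf
    obtain ⟨i, hx2⟩ := hL2
    obtain ⟨c, j, k, b3, b4, hjk, hij, hik, hb34, hcz, hcC, hclx, hs3, ht3, hs4, ht4, houtc,
      htot⟩ := branch_core T hT z a2 a1 (Ne.symm h12) (Set.pair_comm a1 a2 ▸ hout) huniq i
      hx2.symm hL1
    have h13 : a2 ≠ b3 := fun h => hcz (by rw [← hs3, ← h]; exact hs2)
    have h14 : a2 ≠ b4 := fun h => hcz (by rw [← hs4, ← h]; exact hs2)
    have h23 : a1 ≠ b3 := fun h => hcz (by rw [← hs3, ← h]; exact hs1)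
    have h24 : a1 ≠ b4 := fun h => hcz (by rw [← hs4, ← h]; exact hs1)
    refine ⟨c, i, j, k, a2, a1, b3, b4, hjk, hij, hik, Ne.symm h12, h13, h14, h23, h24, hb34,
      hcz, hclx, hs2, hx2.symm, hs1, hcC, hs3, ht3, hs4, ht4, Set.pair_comm a1 a2, houtc, ?_⟩
    intro v p hw
    exact htot v p hw
  · -- neither child a leaf: contradiction
    exfalso
    obtain ⟨d1, d2, hd12, hout1⟩ := outdeg_two_of_internal T hT
      (fun h => no_arc_into_root T a1 h) hL1
    obtain ⟨d3, d4, hd34, hout2⟩ := outdeg_two_of_internal T hT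
      (fun h => no_arc_into_root T a2 h) hL2
    have hsd1 : T.src d1 = T.tgt a1 := by
      have : d1 ∈ {e : A' | T.src e = T.tgt a1} := by rw [hout1]; simp
      exact this
    have hsd2 : T.src d2 = T.tgt a1 := by
      have : d2 ∈ {e : A' | T.src e = T.tgt a1} := by rw [hout1]; simp
      exact this
    have hsd3 : T.src d3 = T.tgt a2 := by
      have : d3 ∈ {e : A' | T.src e = T.tgt a2} := by rw [hout2]; simp
      exact this
    have hsd4 : T.src d4 = T.tgt a2 := by
      have : d4 ∈ {e : A' | T.src e = T.tgt a2} := by rw [hout2]; simp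
      exact this
    obtain ⟨p1, y1, hw1⟩ := reach_leaf T hT (T.tgt d1)
    obtain ⟨p2, y2, hw2⟩ := reach_leaf T hT (T.tgt d2)
    obtain ⟨p3, y3, hw3⟩ := reach_leaf T hT (T.tgt d3)
    obtain ⟨p4, y4, hw4⟩ := reach_leaf T hT (T.tgt d4)
    have W1 : ArcWalk T.src T.tgt z (a1 :: d1 :: p1) (T.leafEmb y1) :=
      ArcWalk.cons' hs1 rfl (ArcWalk.cons hsd1 hw1)
    have W2 : ArcWalk T.src T.tgt z (a1 :: d2 :: p2) (T.leafEmb y2) :=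
      ArcWalk.cons' hs1 rfl (ArcWalk.cons hsd2 hw2)
    have W3 : ArcWalk T.src T.tgt z (a2 :: d3 :: p3) (T.leafEmb y3) :=
      ArcWalk.cons' hs2 rfl (ArcWalk.cons hsd3 hw3)
    have W4 : ArcWalk T.src T.tgt z (a2 :: d4 :: p4) (T.leafEmb y4) :=
      ArcWalk.cons' hs2 rfl (ArcWalk.cons hsd4 hw4)
    have hy12 : y1 ≠ y2 := by
      rintro rfl
      have := huniq _ _ _ W1 W2
      simp only [List.cons.injEq] at this
      exact hd12 this.2.1
    have hy34 : y3 ≠ y4 := by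
      rintro rfl
      have := huniq _ _ _ W3 W4
      simp only [List.cons.injEq] at this
      exact hd34 this.2.1
    have hy13 : y1 ≠ y3 := by
      rintro rfl
      have := huniq _ _ _ W1 W3
      simp only [List.cons.injEq] at this
      exact h12 this.1
    have hy14 : y1 ≠ y4 := by
      rintro rfl
      have := huniq _ _ _ W1 W4
      simp only [List.cons.injEq] at this
      exact h12 this.1
    have hy23 : y2 ≠ y3 := by
      rintro rfl
      have := huniq _ _ _ W2 W3
      simp only [List.cons.injEq] at this
      exact h12 this.1
    have hy24 : y2 ≠ y4 := by
      rintro rfl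
      have := huniq _ _ _ W2 W4
      simp only [List.cons.injEq] at this
      exact h12 this.1
    rcases fin3_four y1 y2 y3 y4 with h|h|h|h|h|h
    · exact hy12 h
    · exact hy13 h
    · exact hy14 h
    · exact hy23 h
    · exact hy24 h
    · exact hy34 h

end Classify3

theorem fin3_other : ∀ x : Fin 3, ∃ y, y ≠ x := by decide

section Classify4
variable {V' : Type u4} {A' : Type u5} (T : PhyloNetwork (Fin 3) V' A')

theorem classify (hT : IsPhyloTree T) :
    (∃ (c : V') (i j k : Fin 3) (b1 b2 b3 b4 : A'),
      j ≠ k ∧ i ≠ j ∧ i ≠ k ∧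
      b1 ≠ b2 ∧ b1 ≠ b3 ∧ b1 ≠ b4 ∧ b2 ≠ b3 ∧ b2 ≠ b4 ∧ b3 ≠ b4 ∧
      c ≠ T.root ∧ (∀ x, c ≠ T.leafEmb x) ∧ (∀ x, T.root ≠ T.leafEmb x) ∧
      T.src b1 = T.root ∧ T.tgt b1 = T.leafEmb i ∧ T.src b2 = T.root ∧ T.tgt b2 = c ∧
      T.src b3 = c ∧ T.tgt b3 = T.leafEmb j ∧ T.src b4 = c ∧ T.tgt b4 = T.leafEmb k ∧
      (∀ v : V', v = T.root ∨ v = c ∨ ∃ x, v = T.leafEmb x) ∧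
      (∀ e : A', e = b1 ∨ e = b2 ∨ e = b3 ∨ e = b4)) ∨
    (∃ (d c : V') (i j k : Fin 3) (b0 b1 b2 b3 b4 : A'),
      j ≠ k ∧ i ≠ j ∧ i ≠ k ∧
      b0 ≠ b1 ∧ b0 ≠ b2 ∧ b0 ≠ b3 ∧ b0 ≠ b4 ∧
      b1 ≠ b2 ∧ b1 ≠ b3 ∧ b1 ≠ b4 ∧ b2 ≠ b3 ∧ b2 ≠ b4 ∧ b3 ≠ b4 ∧
      d ≠ T.root ∧ d ≠ c ∧ (∀ x, d ≠ T.leafEmb x) ∧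
      c ≠ T.root ∧ (∀ x, c ≠ T.leafEmb x) ∧ (∀ x, T.root ≠ T.leafEmb x) ∧
      T.src b0 = T.root ∧ T.tgt b0 = d ∧
      T.src b1 = d ∧ T.tgt b1 = T.leafEmb i ∧ T.src b2 = d ∧ T.tgt b2 = c ∧
      T.src b3 = c ∧ T.tgt b3 = T.leafEmb j ∧ T.src b4 = c ∧ T.tgt b4 = T.leafEmb k ∧
      (∀ v : V', v = T.root ∨ v = d ∨ v = c ∨ ∃ x, v = T.leafEmb x) ∧
      (∀ e : A', e = b0 ∨ e = b1 ∨ e = b2 ∨ e = b3 ∨ e = b4)) := by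
  have hrl := root_not_leaf T
  rcases T.root_outdeg with h1 | h2
  · -- root out-degree 1 : case B
    right
    rw [OutDeg, Set.ncard_eq_one] at h1
    obtain ⟨a0, hset0⟩ := h1
    have hs0 : T.src a0 = T.root := by
      have : a0 ∈ {e : A' | T.src e = T.root} := by rw [hset0]; simp
      exact this
    have honly : ∀ e : A', T.src e = T.root → e = a0 := by
      intro e he
      have : e ∈ ({a0} : Set A') := hset0 ▸ he
      exact this
    set d := T.tgt a0 with hd
    have hdroot : d ≠ T.root := no_arc_into_root T a0
    have hdnl : ¬ ∃ x, T.leafEmb x = d := by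
      rintro ⟨x0, hx0⟩
      obtain ⟨y, hy⟩ := fin3_other x0
      obtain ⟨p, hw⟩ := reach_from_root T hT (T.leafEmb y)
      rcases p with _ | ⟨a, p'⟩
      · exact hrl y hw.nil_eq
      · obtain ⟨hsa, hw'⟩ := hw.cons_inv
        have ha : a = a0 := honly a hsa
        subst ha
        have hw'' : ArcWalk T.src T.tgt (T.leafEmb x0) p' (T.leafEmb y) := by
          rw [hx0, hd]; exact hw'
        obtain ⟨_, hv⟩ := walk_from_leaf T hw''
        exact hy (T.leafEmb_inj hv)
    obtain ⟨a1, a2, h12, houtd⟩ := outdeg_two_of_internal T hT hdroot hdnl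
    have huniqd : ∀ (p : List A') (v : V') (q : List A'), ArcWalk T.src T.tgt d p v →
        ArcWalk T.src T.tgt d q v → p = q := by
      intro p v q hp hq
      have := walk_unique T hT (a0 :: p) v (a0 :: q)
        (ArcWalk.cons hs0 hp) (ArcWalk.cons hs0 hq)
      simpa using this
    have hlr : ∀ y : Fin 3, ∃ p, ArcWalk T.src T.tgt d p (T.leafEmb y) := by
      intro y
      obtain ⟨p, hw⟩ := reach_from_root T hT (T.leafEmb y)
      rcases p with _ | ⟨a, p'⟩
      · exact absurd hw.nil_eq (hrl y)
      · obtain ⟨hsa, hw'⟩ := hw.cons_inv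
        have ha : a = a0 := honly a hsa
        subst ha
        exact ⟨p', hw'⟩
    obtain ⟨c, i, j, k, b1, b2, b3, b4, hjk, hij, hik, hb12, hb13, hb14, hb23, hb24, hb34,
      hcd, hclx, hsb1, htb1, hsb2, htb2, hsb3, htb3, hsb4, htb4, hpair, houtc, htot⟩ :=
      branch_data T hT d a1 a2 h12 houtd huniqd hlr
    have hcroot : c ≠ T.root := fun h => no_arc_into_root T b2 (htb2 ▸ h)
    have hdl : ∀ x, d ≠ T.leafEmb x := fun x h => hdnl ⟨x, h.symm⟩
    have hb01 : a0 ≠ b1 := fun h => hdroot (by rw [← hsb1, ← h, hs0])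
    have hb02 : a0 ≠ b2 := fun h => hdroot (by rw [← hsb2, ← h, hs0])
    have hb03 : a0 ≠ b3 := fun h => hcroot (by rw [← hsb3, ← h, hs0])
    have hb04 : a0 ≠ b4 := fun h => hcroot (by rw [← hsb4, ← h, hs0])
    have hVtot : ∀ v : V', v = T.root ∨ v = d ∨ v = c ∨ ∃ x, v = T.leafEmb x := by
      intro v
      obtain ⟨p, hw⟩ := reach_from_root T hT v
      cases hw with
      | nil => exact Or.inl rfl
      | @cons _ _ a p' hsa hw' =>
        have ha : a = a0 := honly a hsa
        subst ha
        exact Or.inr (htot v p' hw')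
    have hAtot : ∀ e : A', e = a0 ∨ e = b1 ∨ e = b2 ∨ e = b3 ∨ e = b4 := by
      intro e
      rcases hVtot (T.src e) with he | he | he | ⟨x, he⟩
      · exact Or.inl (honly e he)
      · have : e ∈ ({b1, b2} : Set A') := hpair ▸ houtd ▸ he
        rcases this with rfl | rfl
        · exact Or.inr (Or.inl rfl)
        · exact Or.inr (Or.inr (Or.inl rfl))
      · have : e ∈ ({b3, b4} : Set A') := houtc ▸ he
        rcases this with rfl | rfl
        · exact Or.inr (Or.inr (Or.inr (Or.inl rfl)))
        · exact Or.inr (Or.inr (Or.inr (Or.inr rfl)))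
      · exact absurd he (no_arc_from_leaf T x e)
    exact ⟨d, c, i, j, k, a0, b1, b2, b3, b4, hjk, hij, hik, hb01, hb02, hb03, hb04,
      hb12, hb13, hb14, hb23, hb24, hb34, hdroot, fun h => hcd h.symm, hdl,
      hcroot, hclx, hrl, hs0, rfl, hsb1, htb1, hsb2, htb2, hsb3, htb3, hsb4, htb4,
      hVtot, hAtot⟩
  · -- root out-degree 2 : case A
    left
    rw [OutDeg, Set.ncard_eq_two] at h2
    obtain ⟨a1, a2, h12, hset⟩ := h2
    obtain ⟨c, i, j, k, b1, b2, b3, b4, hjk, hij, hik, hb12, hb13, hb14, hb23, hb24, hb34,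
      hcr, hclx, hsb1, htb1, hsb2, htb2, hsb3, htb3, hsb4, htb4, hpair, houtc, htot⟩ :=
      branch_data T hT T.root a1 a2 h12 hset (walk_unique T hT)
        (fun y => reach_from_root T hT (T.leafEmb y))
    have hVtot : ∀ v : V', v = T.root ∨ v = c ∨ ∃ x, v = T.leafEmb x := by
      intro v
      obtain ⟨p, hw⟩ := reach_from_root T hT v
      exact htot v p hw
    have hAtot : ∀ e : A', e = b1 ∨ e = b2 ∨ e = b3 ∨ e = b4 := by
      intro e
      rcases hVtot (T.src e) with he | he | ⟨x, he⟩
      · have : e ∈ ({b1, b2} : Set A') := hpair ▸ hset ▸ he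
        rcases this with rfl | rfl
        · exact Or.inl rfl
        · exact Or.inr (Or.inl rfl)
      · have : e ∈ ({b3, b4} : Set A') := houtc ▸ he
        rcases this with rfl | rfl
        · exact Or.inr (Or.inr (Or.inl rfl))
        · exact Or.inr (Or.inr (Or.inr rfl))
      · exact absurd he (no_arc_from_leaf T x e)
    exact ⟨c, i, j, k, b1, b2, b3, b4, hjk, hij, hik, hb12, hb13, hb14, hb23, hb24, hb34,
      hcr, hclx, hrl, hsb1, htb1, hsb2, htb2, hsb3, htb3, hsb4, htb4, hVtot, hAtot⟩

end Classify4

set_option synthInstance.maxSize 1024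
set_option maxHeartbeats 1000000

theorem fin3_cases : ∀ i j k : Fin 3, i ≠ j → i ≠ k → j ≠ k →
    (i=0∧j=1∧k=2) ∨ (i=0∧j=2∧k=1) ∨ (i=1∧j=0∧k=2) ∨ (i=1∧j=2∧k=0) ∨
    (i=2∧j=0∧k=1) ∨ (i=2∧j=1∧k=0) := by decide

theorem wA0_1 : ArcWalk Nsrc Ntgt 0 [0,12,5,10] (Nleaf 0) := (ArcWalk.cons' rfl rfl (ArcWalk.cons' rfl rfl (ArcWalk.cons' rfl rfl (ArcWalk.single' rfl rfl))))
theorem wA0_2 : ArcWalk Nsrc Ntgt 0 [1,8] 1 := (ArcWalk.cons' rfl rfl (ArcWalk.single' rfl rfl))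
theorem wA0_3 : ArcWalk Nsrc Ntgt 1 [2,7] (Nleaf 1) := (ArcWalk.cons' rfl rfl (ArcWalk.single' rfl rfl))
theorem wA0_4 : ArcWalk Nsrc Ntgt 1 [3,11] (Nleaf 2) := (ArcWalk.cons' rfl rfl (ArcWalk.single' rfl rfl))
theorem wA1_1 : ArcWalk Nsrc Ntgt 0 [1,8,2,7] (Nleaf 1) := (ArcWalk.cons' rfl rfl (ArcWalk.cons' rfl rfl (ArcWalk.cons' rfl rfl (ArcWalk.single' rfl rfl))))
theorem wA1_2 : ArcWalk Nsrc Ntgt 0 [0,12] 2 := (ArcWalk.cons' rfl rfl (ArcWalk.single' rfl rfl))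
theorem wA1_3 : ArcWalk Nsrc Ntgt 2 [5,10] (Nleaf 0) := (ArcWalk.cons' rfl rfl (ArcWalk.single' rfl rfl))
theorem wA1_4 : ArcWalk Nsrc Ntgt 2 [4,11] (Nleaf 2) := (ArcWalk.cons' rfl rfl (ArcWalk.single' rfl rfl))
theorem wA2_1 : ArcWalk Nsrc Ntgt 0 [0,12,4,11] (Nleaf 2) := (ArcWalk.cons' rfl rfl (ArcWalk.cons' rfl rfl (ArcWalk.cons' rfl rfl (ArcWalk.single' rfl rfl))))
theorem wA2_2 : ArcWalk Nsrc Ntgt 0 [1,8,2] 3 := (ArcWalk.cons' rfl rfl (ArcWalk.cons' rfl rfl (ArcWalk.single' rfl rfl)))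
theorem wA2_3 : ArcWalk Nsrc Ntgt 3 [6,10] (Nleaf 0) := (ArcWalk.cons' rfl rfl (ArcWalk.single' rfl rfl))
theorem wA2_4 : ArcWalk Nsrc Ntgt 3 [7] (Nleaf 1) := (ArcWalk.single' rfl rfl)
theorem wB0_0 : ArcWalk Nsrc Ntgt 0 [1] 4 := (ArcWalk.single' rfl rfl)
theorem wB0_1 : ArcWalk Nsrc Ntgt 4 [9,12,5,10] (Nleaf 0) := (ArcWalk.cons' rfl rfl (ArcWalk.cons' rfl rfl (ArcWalk.cons' rfl rfl (ArcWalk.single' rfl rfl))))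
theorem wB0_2 : ArcWalk Nsrc Ntgt 4 [8] 1 := (ArcWalk.single' rfl rfl)
theorem wB0_3 : ArcWalk Nsrc Ntgt 1 [2,7] (Nleaf 1) := (ArcWalk.cons' rfl rfl (ArcWalk.single' rfl rfl))
theorem wB0_4 : ArcWalk Nsrc Ntgt 1 [3,11] (Nleaf 2) := (ArcWalk.cons' rfl rfl (ArcWalk.single' rfl rfl))
theorem wB1_0 : ArcWalk Nsrc Ntgt 0 [1] 4 := (ArcWalk.single' rfl rfl)
theorem wB1_1 : ArcWalk Nsrc Ntgt 4 [8,2,7] (Nleaf 1) := (ArcWalk.cons' rfl rfl (ArcWalk.cons' rfl rfl (ArcWalk.single' rfl rfl)))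
theorem wB1_2 : ArcWalk Nsrc Ntgt 4 [9,12] 2 := (ArcWalk.cons' rfl rfl (ArcWalk.single' rfl rfl))
theorem wB1_3 : ArcWalk Nsrc Ntgt 2 [5,10] (Nleaf 0) := (ArcWalk.cons' rfl rfl (ArcWalk.single' rfl rfl))
theorem wB1_4 : ArcWalk Nsrc Ntgt 2 [4,11] (Nleaf 2) := (ArcWalk.cons' rfl rfl (ArcWalk.single' rfl rfl))
theorem wB2_0 : ArcWalk Nsrc Ntgt 0 [1] 4 := (ArcWalk.single' rfl rfl)
theorem wB2_1 : ArcWalk Nsrc Ntgt 4 [9,12,4,11] (Nleaf 2) := (ArcWalk.cons' rfl rfl (ArcWalk.cons' rfl rfl (ArcWalk.cons' rfl rfl (ArcWalk.single' rfl rfl))))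
theorem wB2_2 : ArcWalk Nsrc Ntgt 4 [8,2] 3 := (ArcWalk.cons' rfl rfl (ArcWalk.single' rfl rfl))
theorem wB2_3 : ArcWalk Nsrc Ntgt 3 [6,10] (Nleaf 0) := (ArcWalk.cons' rfl rfl (ArcWalk.single' rfl rfl))
theorem wB2_4 : ArcWalk Nsrc Ntgt 3 [7] (Nleaf 1) := (ArcWalk.single' rfl rfl)


/-- There is a binary phylogenetic network over a 3-element leaf set
`X` that is based on every rooted binary phylogenetic `X`-tree. -/
theorem statement_17 :
    ∃ (X V A : Type) (N : PhyloNetwork X V A),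
      Nat.card X = 3 ∧
      ∀ (V' : Type u4) (A' : Type u5) (T : PhyloNetwork X V' A'),
        IsPhyloTree T → BasedOn N T := by
  refine ⟨Fin 3, Fin 11, Fin 13, MyN, by simp, ?_⟩
  intro V' A' T hT
  rcases classify T hT with
    ⟨c, i, j, k, b1, b2, b3, b4, hjk, hij, hik, hb12, hb13, hb14, hb23, hb24, hb34,
      hcr, hcl, hrl, hs1, ht1, hs2, ht2, hs3, ht3, hs4, ht4, hVtot, hAtot⟩ |
    ⟨d, c, i, j, k, b0, b1, b2, b3, b4, hjk, hij, hik, hb01, hb02, hb03, hb04,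
      hb12, hb13, hb14, hb23, hb24, hb34, hdr, hdc, hdl, hcr, hcl, hrl,
      hs0, ht0, hs1, ht1, hs2, ht2, hs3, ht3, hs4, ht4, hVtot, hAtot⟩
  · rcases fin3_cases i j k hij hik hjk with ⟨rfl, rfl, rfl⟩ | ⟨rfl, rfl, rfl⟩ |
      ⟨rfl, rfl, rfl⟩ | ⟨rfl, rfl, rfl⟩ | ⟨rfl, rfl, rfl⟩ | ⟨rfl, rfl, rfl⟩
    · exact basedOn_A T c 0 1 2 b1 b2 b3 b4 hb12 hb13 hb14 hb23 hb24 hb34 hcr hcl hrl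
        hs1 ht1 hs2 ht2 hs3 ht3 hs4 ht4 hVtot hAtot SA0 supA0 1
        [0,12,5,10] [1,8] [2,7] [3,11] wA0_1 wA0_2 wA0_3 wA0_4
        (by decide) (by decide) (by decide) (by decide) (by decide) (by decide) (by decide)
        (by decide) (by decide)
    · exact basedOn_A T c 0 2 1 b1 b2 b3 b4 hb12 hb13 hb14 hb23 hb24 hb34 hcr hcl hrl
        hs1 ht1 hs2 ht2 hs3 ht3 hs4 ht4 hVtot hAtot SA0 supA0 1
        [0,12,5,10] [1,8] [3,11] [2,7] wA0_1 wA0_2 wA0_4 wA0_3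
        (by decide) (by decide) (by decide) (by decide) (by decide) (by decide) (by decide)
        (by decide) (by decide)
    · exact basedOn_A T c 1 0 2 b1 b2 b3 b4 hb12 hb13 hb14 hb23 hb24 hb34 hcr hcl hrl
        hs1 ht1 hs2 ht2 hs3 ht3 hs4 ht4 hVtot hAtot SA1 supA1 2
        [1,8,2,7] [0,12] [5,10] [4,11] wA1_1 wA1_2 wA1_3 wA1_4
        (by decide) (by decide) (by decide) (by decide) (by decide) (by decide) (by decide)
        (by decide) (by decide)
    · exact basedOn_A T c 1 2 0 b1 b2 b3 b4 hb12 hb13 hb14 hb23 hb24 hb34 hcr hcl hrl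
        hs1 ht1 hs2 ht2 hs3 ht3 hs4 ht4 hVtot hAtot SA1 supA1 2
        [1,8,2,7] [0,12] [4,11] [5,10] wA1_1 wA1_2 wA1_4 wA1_3
        (by decide) (by decide) (by decide) (by decide) (by decide) (by decide) (by decide)
        (by decide) (by decide)
    · exact basedOn_A T c 2 0 1 b1 b2 b3 b4 hb12 hb13 hb14 hb23 hb24 hb34 hcr hcl hrl
        hs1 ht1 hs2 ht2 hs3 ht3 hs4 ht4 hVtot hAtot SA2 supA2 3
        [0,12,4,11] [1,8,2] [6,10] [7] wA2_1 wA2_2 wA2_3 wA2_4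
        (by decide) (by decide) (by decide) (by decide) (by decide) (by decide) (by decide)
        (by decide) (by decide)
    · exact basedOn_A T c 2 1 0 b1 b2 b3 b4 hb12 hb13 hb14 hb23 hb24 hb34 hcr hcl hrl
        hs1 ht1 hs2 ht2 hs3 ht3 hs4 ht4 hVtot hAtot SA2 supA2 3
        [0,12,4,11] [1,8,2] [7] [6,10] wA2_1 wA2_2 wA2_4 wA2_3
        (by decide) (by decide) (by decide) (by decide) (by decide) (by decide) (by decide)
        (by decide) (by decide)
  · rcases fin3_cases i j k hij hik hjk with ⟨rfl, rfl, rfl⟩ | ⟨rfl, rfl, rfl⟩ |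
      ⟨rfl, rfl, rfl⟩ | ⟨rfl, rfl, rfl⟩ | ⟨rfl, rfl, rfl⟩ | ⟨rfl, rfl, rfl⟩
    · exact basedOn_B T d c 0 1 2 b0 b1 b2 b3 b4 hb01 hb02 hb03 hb04
        hb12 hb13 hb14 hb23 hb24 hb34 hdr hdc hdl hcr hcl hrl
        hs0 ht0 hs1 ht1 hs2 ht2 hs3 ht3 hs4 ht4 hVtot hAtot SB0 supB0 4 1
        [1] [9,12,5,10] [8] [2,7] [3,11]
        wB0_0 wB0_1 wB0_2 wB0_3 wB0_4
        (by decide) (by decide) (by decide) (by decide) (by decide) (by decide) (by decide)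
        (by decide) (by decide) (by decide) (by decide) (by decide)
    · exact basedOn_B T d c 0 2 1 b0 b1 b2 b3 b4 hb01 hb02 hb03 hb04
        hb12 hb13 hb14 hb23 hb24 hb34 hdr hdc hdl hcr hcl hrl
        hs0 ht0 hs1 ht1 hs2 ht2 hs3 ht3 hs4 ht4 hVtot hAtot SB0 supB0 4 1
        [1] [9,12,5,10] [8] [3,11] [2,7]
        wB0_0 wB0_1 wB0_2 wB0_4 wB0_3
        (by decide) (by decide) (by decide) (by decide) (by decide) (by decide) (by decide)
        (by decide) (by decide) (by decide) (by decide) (by decide)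
    · exact basedOn_B T d c 1 0 2 b0 b1 b2 b3 b4 hb01 hb02 hb03 hb04
        hb12 hb13 hb14 hb23 hb24 hb34 hdr hdc hdl hcr hcl hrl
        hs0 ht0 hs1 ht1 hs2 ht2 hs3 ht3 hs4 ht4 hVtot hAtot SB1 supB1 4 2
        [1] [8,2,7] [9,12] [5,10] [4,11]
        wB1_0 wB1_1 wB1_2 wB1_3 wB1_4
        (by decide) (by decide) (by decide) (by decide) (by decide) (by decide) (by decide)
        (by decide) (by decide) (by decide) (by decide) (by decide)
    · exact basedOn_B T d c 1 2 0 b0 b1 b2 b3 b4 hb01 hb02 hb03 hb04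
        hb12 hb13 hb14 hb23 hb24 hb34 hdr hdc hdl hcr hcl hrl
        hs0 ht0 hs1 ht1 hs2 ht2 hs3 ht3 hs4 ht4 hVtot hAtot SB1 supB1 4 2
        [1] [8,2,7] [9,12] [4,11] [5,10]
        wB1_0 wB1_1 wB1_2 wB1_4 wB1_3
        (by decide) (by decide) (by decide) (by decide) (by decide) (by decide) (by decide)
        (by decide) (by decide) (by decide) (by decide) (by decide)
    · exact basedOn_B T d c 2 0 1 b0 b1 b2 b3 b4 hb01 hb02 hb03 hb04
        hb12 hb13 hb14 hb23 hb24 hb34 hdr hdc hdl hcr hcl hrl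
        hs0 ht0 hs1 ht1 hs2 ht2 hs3 ht3 hs4 ht4 hVtot hAtot SB2 supB2 4 3
        [1] [9,12,4,11] [8,2] [6,10] [7]
        wB2_0 wB2_1 wB2_2 wB2_3 wB2_4
        (by decide) (by decide) (by decide) (by decide) (by decide) (by decide) (by decide)
        (by decide) (by decide) (by decide) (by decide) (by decide)
    · exact basedOn_B T d c 2 1 0 b0 b1 b2 b3 b4 hb01 hb02 hb03 hb04
        hb12 hb13 hb14 hb23 hb24 hb34 hdr hdc hdl hcr hcl hrl
        hs0 ht0 hs1 ht1 hs2 ht2 hs3 ht3 hs4 ht4 hVtot hAtot SB2 supB2 4 3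
        [1] [9,12,4,11] [8,2] [7] [6,10]
        wB2_0 wB2_1 wB2_2 wB2_4 wB2_3
        (by decide) (by decide) (by decide) (by decide) (by decide) (by decide) (by decide)
        (by decide) (by decide) (by decide) (by decide) (by decide)
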